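/- arXiv:0812.0562 — 6 statements merged into one kernel-verified Lean document; each statement's English description precedes it below -/
import Mathlib

section
/- Let H : ℝ → Matrix n n ℂ be continuous on [μ, μ+Δλ] and P times differentiable there, and let U be the ordered exponential generated by H. Then for every integer ℓ with 0 ≤ ℓ ≤ P+1 and every s ∈ [μ, μ+Δλ], the ℓ-th derivative of s ↦ U(s,μ) exists and satisfies ∂_s^ℓ U(s,μ) = T_ℓ(s) U(s,μ), where T_0(u) = 1 and T_{p+1}(u) = T_p(u) H(u) + T_p'(u). -/
open scoped Matrix.Norms.L2Operator Topology

noncomputable section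

/-- The Suzuki coefficient `s_p = (4 - 4^{1/(2p+1)})⁻¹`. -/
def sCoef (p : ℕ) : ℝ := (4 - 4 ^ ((1 : ℝ) / (2 * p + 1)))⁻¹

variable {n : Type*} [Fintype n] [DecidableEq n]

/-- `U(x,y)` is the ordered exponential generated by `H`:
the solution of `∂ₓ U(x,y) = H(x) U(x,y)` with `U(y,y) = 1`. -/
def IsOrderedExp (H : ℝ → Matrix n n ℂ) (U : ℝ → ℝ → Matrix n n ℂ) : Prop :=
  (∀ y, U y y = 1) ∧ ∀ x y, HasDerivAt (fun s => U s y) (H x * U x y) x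

/-- The first-order (symmetrized Trotter) Lie-Trotter-Suzuki formula `U₁(x,y)`. -/
def lts1 {m : ℕ} (Hs : Fin m → ℝ → Matrix n n ℂ) (x y : ℝ) : Matrix n n ℂ :=
  (List.ofFn fun j : Fin m =>
      NormedSpace.exp (((x - y) / 2) • Hs j ((x + y) / 2))).prod *
  ((List.ofFn fun j : Fin m =>
      NormedSpace.exp (((x - y) / 2) • Hs j ((x + y) / 2))).reverse).prod

/-- Suzuki's recursive step with coefficient `s_p`, producing
`V'(y+t, y) = V(y+t, y+(1-s_p)t) V(y+(1-s_p)t, y+(1-2s_p)t) V(y+(1-2s_p)t, y+2s_p t)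
  V(y+2s_p t, y+s_p t) V(y+s_p t, y)` where `t = x - y`. -/
def suzukiStep (p : ℕ) (V : ℝ → ℝ → Matrix n n ℂ) (x y : ℝ) : Matrix n n ℂ :=
  V x (y + (1 - sCoef p) * (x - y)) *
    V (y + (1 - sCoef p) * (x - y)) (y + (1 - 2 * sCoef p) * (x - y)) *
    V (y + (1 - 2 * sCoef p) * (x - y)) (y + 2 * sCoef p * (x - y)) *
    V (y + 2 * sCoef p * (x - y)) (y + sCoef p * (x - y)) *
    V (y + sCoef p * (x - y)) y

/-- The `k`-th order Lie-Trotter-Suzuki product formula `U_k` (for `k ≥ 1`);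
`U_{p+1}` is obtained from `U_p` by Suzuki's recursive step with coefficient `s_p`. -/
def lts {m : ℕ} (Hs : Fin m → ℝ → Matrix n n ℂ) : ℕ → ℝ → ℝ → Matrix n n ℂ
  | 0 => lts1 Hs
  | 1 => lts1 Hs
  | (q + 2) => suzukiStep (q + 1) (lts Hs (q + 1))

/-- The family `{H_j}` is `P`-smooth on `[a,b]`: each `H_j` is `P` times differentiable there
(the norm of the `P`-th derivative is automatically finite). -/
def PSmoothOn {m : ℕ} (Hs : Fin m → ℝ → Matrix n n ℂ) (P : ℕ) (a b : ℝ) : Prop :=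
  ∀ j, ∀ p < P,
    DifferentiableOn ℝ (iteratedDerivWithin p (Hs j) (Set.Icc a b)) (Set.Icc a b)

/-- The family `{H_j}` is `Λ`-`P`-smooth on `[a,b]`:
it is `P`-smooth and `Λ ≥ sup_{p ≤ P} sup_{u} (∑_j ‖H_j^{(p)}(u)‖)^{1/(p+1)}`,
i.e. `∑_j ‖H_j^{(p)}(u)‖ ≤ Λ^{p+1}` for all `0 ≤ p ≤ P` and `u ∈ [a,b]`. -/
def LambdaSmoothOn {m : ℕ} (Hs : Fin m → ℝ → Matrix n n ℂ) (Λ : ℝ) (P : ℕ) (a b : ℝ) :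
    Prop :=
  PSmoothOn Hs P a b ∧ 0 ≤ Λ ∧
    ∀ p ≤ P, ∀ u ∈ Set.Icc a b,
      ∑ j, ‖iteratedDerivWithin p (Hs j) (Set.Icc a b) u‖ ≤ Λ ^ (p + 1)

/-- `Q_k`:  `Q_1 = 1/2` and `Q_k = (1/2) ∏_{j=1}^{k-1} max {s_j, |1 - 4 s_j|}`. -/
def Qk (k : ℕ) : ℝ :=
  (1 / 2) * ∏ j ∈ Finset.Icc 1 (k - 1), max (sCoef j) |1 - 4 * sCoef j|

/-- The operators `T_p`: `T_0 = 1`, `T_{p+1}(u) = T_p(u) H(u) + T_p'(u)`,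
with derivatives taken within the set `s`. -/
def Tseq (H : ℝ → Matrix n n ℂ) (s : Set ℝ) : ℕ → ℝ → Matrix n n ℂ
  | 0 => fun _ => 1
  | (p + 1) => fun u => Tseq H s p u * H u + derivWithin (Tseq H s p) s u



section Aux
set_option linter.unusedVariables false

/-- `f` is `k` times differentiable on `s`, recursively via `derivWithin`. -/
def DiffOnN (s : Set ℝ) : ℕ → (ℝ → Matrix n n ℂ) → Prop
  | 0, _ => True
  | (k + 1), f => DifferentiableOn ℝ f s ∧ DiffOnN s k (derivWithin f s)

lemma DiffOnN.congr {s : Set ℝ} : ∀ {k : ℕ} {f g : ℝ → Matrix n n ℂ},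
    Set.EqOn f g s → DiffOnN s k f → DiffOnN s k g
  | 0, _, _, _, _ => trivial
  | (k + 1), f, g, hfg, ⟨hd, hk⟩ =>
    ⟨fun x hx => (hd x hx).congr (fun y hy => (hfg hy).symm) (hfg hx).symm,
     DiffOnN.congr (fun x hx => derivWithin_congr hfg (hfg hx)) hk⟩

lemma DiffOnN.succ {s : Set ℝ} : ∀ {k : ℕ} {f : ℝ → Matrix n n ℂ},
    DiffOnN s (k + 1) f → DiffOnN s k f
  | 0, _, _ => trivial
  | (k + 1), f, ⟨hd, hk⟩ => ⟨hd, hk.succ⟩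

lemma DiffOnN.mono {s : Set ℝ} {k k' : ℕ} (h : k ≤ k') {f : ℝ → Matrix n n ℂ}
    (hf : DiffOnN s k' f) : DiffOnN s k f := by
  induction k' with
  | zero => exact (Nat.le_zero.mp h) ▸ hf
  | succ m ih =>
      rcases Nat.eq_or_lt_of_le h with rfl | hlt
      · exact hf
      · exact ih (Nat.lt_succ_iff.mp hlt) hf.succ

lemma DiffOnN.const {s : Set ℝ} (hs : UniqueDiffOn ℝ s) :
    ∀ (k : ℕ) (c : Matrix n n ℂ), DiffOnN s k (fun _ => c)
  | 0, _ => trivial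
  | (k + 1), c =>
    ⟨differentiableOn_const c,
      (DiffOnN.const hs k 0).congr fun x hx => (congrFun (derivWithin_const ..) x).symm⟩

lemma DiffOnN.add {s : Set ℝ} (hs : UniqueDiffOn ℝ s) :
    ∀ {k : ℕ} {f g : ℝ → Matrix n n ℂ},
    DiffOnN s k f → DiffOnN s k g → DiffOnN s k (fun x => f x + g x)
  | 0, _, _, _, _ => trivial
  | (k + 1), f, g, ⟨hfd, hfk⟩, ⟨hgd, hgk⟩ =>
    ⟨hfd.add hgd,
      (DiffOnN.add hs hfk hgk).congr fun x hx =>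
        (derivWithin_fun_add (hfd x hx) (hgd x hx)).symm⟩

lemma DiffOnN.mul {s : Set ℝ} (hs : UniqueDiffOn ℝ s) :
    ∀ {k : ℕ} {f g : ℝ → Matrix n n ℂ},
    DiffOnN s k f → DiffOnN s k g → DiffOnN s k (fun x => f x * g x)
  | 0, _, _, _, _ => trivial
  | (k + 1), f, g, ⟨hfd, hfk⟩, ⟨hgd, hgk⟩ =>
    ⟨hfd.mul hgd,
      (DiffOnN.add hs
        (DiffOnN.mul hs hfk (DiffOnN.succ ⟨hgd, hgk⟩))
        (DiffOnN.mul hs (DiffOnN.succ ⟨hfd, hfk⟩) hgk)).congr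
        fun x hx => (derivWithin_fun_mul (hfd x hx) (hgd x hx)).symm⟩

lemma diffOnN_of_iterated {s : Set ℝ} (hs : UniqueDiffOn ℝ s) :
    ∀ (k : ℕ) (f : ℝ → Matrix n n ℂ),
    (∀ p < k, DifferentiableOn ℝ (iteratedDerivWithin p f s) s) → DiffOnN s k f
  | 0, _, _ => trivial
  | (k + 1), f, h =>
    ⟨(h 0 k.succ_pos).congr fun x hx =>
        (congrFun (iteratedDerivWithin_zero (f := f) (s := s)) x).symm,
      diffOnN_of_iterated hs k (derivWithin f s) fun p hp =>
        (h (p + 1) (Nat.succ_lt_succ hp)).congr fun x hx =>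
          (congrFun iteratedDerivWithin_succ' x).symm⟩

end Aux

/-- for `0 ≤ ℓ ≤ P+1` the `ℓ`-th derivative of `s ↦ U(s,μ)` exists on
`[μ, μ+Δt]` and equals `T_ℓ(s) U(s,μ)`. -/
theorem stmt2 {n : Type*} [Fintype n] [DecidableEq n]
    (H : ℝ → Matrix n n ℂ) (hHcont : Continuous H)
    (U : ℝ → ℝ → Matrix n n ℂ) (hU : IsOrderedExp H U)
    (P : ℕ) (μ Δt : ℝ) (hΔt : 0 < Δt)
    (hdiff : ∀ p < P, DifferentiableOn ℝ
      (iteratedDerivWithin p H (Set.Icc μ (μ + Δt))) (Set.Icc μ (μ + Δt))) :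
    ∀ ℓ ≤ P + 1,
      (ℓ ≤ P → DifferentiableOn ℝ
        (iteratedDerivWithin ℓ (fun s => U s μ) (Set.Icc μ (μ + Δt)))
        (Set.Icc μ (μ + Δt))) ∧
      ∀ s ∈ Set.Icc μ (μ + Δt),
        iteratedDerivWithin ℓ (fun x => U x μ) (Set.Icc μ (μ + Δt)) s
          = Tseq H (Set.Icc μ (μ + Δt)) ℓ s * U s μ := by
  set t : Set ℝ := Set.Icc μ (μ + Δt) with ht
  have hs : UniqueDiffOn ℝ t := uniqueDiffOn_Icc (by linarith)
  have hUdiff : ∀ x, HasDerivAt (fun y => U y μ) (H x * U x μ) x := fun x => hU.2 x μ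
  have hUdOn : DifferentiableOn ℝ (fun y => U y μ) t := fun x _ =>
    (hUdiff x).differentiableAt.differentiableWithinAt
  have hHN : DiffOnN t P H := diffOnN_of_iterated hs P H hdiff
  -- smoothness of the T operators
  have hT : ∀ k ≤ P, DiffOnN t (P + 1 - k) (Tseq H t k) := by
    intro k
    induction k with
    | zero => intro _; exact DiffOnN.const hs _ _
    | succ m ih =>
      intro hm
      have hTm := ih (by omega)
      have hsucc : P + 1 - m = (P + 1 - (m + 1)) + 1 := by omega
      rw [hsucc] at hTm
      show DiffOnN t _ (fun u => Tseq H t m u * H u + derivWithin (Tseq H t m) t u)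
      exact DiffOnN.add hs
        (DiffOnN.mul hs hTm.succ (DiffOnN.mono (by omega) hHN)) hTm.2
  -- the key equality
  have key : ∀ ℓ ≤ P + 1, ∀ x ∈ t,
      iteratedDerivWithin ℓ (fun y => U y μ) t x = Tseq H t ℓ x * U x μ := by
    intro ℓ
    induction ℓ with
    | zero =>
      intro _ x hx
      rw [iteratedDerivWithin_zero]
      show U x μ = 1 * U x μ
      rw [one_mul]
    | succ m ih =>
      intro hm x hx
      have hTdm := hT m (by omega)
      have hTdiff : DifferentiableOn ℝ (Tseq H t m) t :=
        (DiffOnN.mono (show 1 ≤ P + 1 - m by omega) hTdm).1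
      rw [iteratedDerivWithin_succ,
        derivWithin_congr (fun y hy => ih (by omega) y hy) (ih (by omega) x hx),
        derivWithin_fun_mul (hTdiff x hx) (hUdOn x hx),
        (hUdiff x).hasDerivWithinAt.derivWithin (hs x hx)]
      show _ = (Tseq H t m x * H x + derivWithin (Tseq H t m) t x) * U x μ
      rw [add_mul, mul_assoc, add_comm]
  intro ℓ hℓ
  refine ⟨fun hℓP => ?_, key ℓ hℓ⟩
  have hTdiff : DifferentiableOn ℝ (Tseq H t ℓ) t :=
    (DiffOnN.mono (show 1 ≤ P + 1 - ℓ by omega) (hT ℓ hℓP)).1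
  exact (hTdiff.mul hUdOn).congr (key ℓ hℓ)

end
end

section
/- Let H : ℝ → Matrix n n ℂ be continuous, let U be the ordered exponential generated by H, and let q be a positive even integer. Suppose V(x,y) is defined for x,y in a neighborhood of μ, satisfies the symmetry V(y,x) = V(x,y)^{-1}, and there is a continuous map Ẽ : ℝ → Matrix n n ℂ such that V(ν+t, ν) = U(ν+t, ν) + Ẽ(ν) t^{q} + O(|t|^{q+1}) as t → 0, uniformly for ν near μ. Then Ẽ(μ) = 0. -/
open scoped Matrix.Norms.L2Operator Topology

noncomputable section

variable {n : Type*} [Fintype n] [DecidableEq n]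

open Filter Set
theorem ordExp_group (H : ℝ → Matrix n n ℂ) (hH : Continuous H)
    (U : ℝ → ℝ → Matrix n n ℂ) (hU : IsOrderedExp H U) (x y z : ℝ) :
    U x z = U x y * U y z := by
  obtain ⟨h1, h2⟩ := hU
  set a : ℝ := min x y - 1 with ha
  set b : ℝ := max x y + 1 with hb
  have hax : a ≤ x := by have := min_le_left x y; simp only [ha]; linarith
  have hay : a < y := by have := min_le_right x y; simp [ha]; linarith
  have hxb : x ≤ b := by have := le_max_left x y; simp [hb]; linarith
  have hyb : y < b := by have := le_max_right x y; simp [hb]; linarith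
  obtain ⟨M, hM⟩ : ∃ M, ∀ t ∈ Set.Icc a b, ‖H t‖ ≤ M :=
    isCompact_Icc.exists_bound_of_continuousOn hH.continuousOn
  set v : ℝ → Matrix n n ℂ → Matrix n n ℂ := fun t u => H (max a (min b t)) * u with hv
  have hlip : ∀ t, LipschitzOnWith M.toNNReal (v t) Set.univ := by
    intro t
    apply LipschitzWith.lipschitzOnWith
    apply LipschitzWith.of_dist_le_mul
    intro u w
    have hmem : max a (min b t) ∈ Set.Icc a b := by
      constructor
      · exact le_max_left _ _
      · apply max_le (by linarith) (min_le_left _ _)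
    calc dist (v t u) (v t w) = ‖H (max a (min b t)) * (u - w)‖ := by
          rw [dist_eq_norm, hv]; simp [mul_sub]
      _ ≤ ‖H (max a (min b t))‖ * ‖u - w‖ := norm_mul_le _ _
      _ ≤ M.toNNReal * dist u w := by
          rw [dist_eq_norm]
          exact mul_le_mul_of_nonneg_right ((hM _ hmem).trans (Real.le_coe_toNNReal M))
            (norm_nonneg _)
  have key : Set.EqOn (fun s => U s z) (fun s => U s y * U y z) (Set.Icc a b) := by
    apply ODE_solution_unique_of_mem_Icc (s := fun _ => Set.univ) (fun t _ => hlip t)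
      (t₀ := y) ⟨hay, hyb⟩
    · exact fun t _ => (h2 t z).continuousAt.continuousWithinAt
    · intro t ht
      have : max a (min b t) = t := by
        rw [min_eq_right ht.2.le, max_eq_right ht.1.le]
      simpa [hv, this] using h2 t z
    · intro t _; trivial
    · exact fun t _ => ((h2 t y).continuousAt.mul continuousAt_const).continuousWithinAt
    · intro t ht
      have hmm : max a (min b t) = t := by
        rw [min_eq_right ht.2.le, max_eq_right ht.1.le]
      have := (h2 t y).mul_const (U y z)
      simpa [hv, hmm, mul_assoc] using this
    · intro t _; trivial
    · simp [h1]
  exact key ⟨hax, hxb⟩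

/-- a symmetric approximation `V(ν+t,ν) = U(ν+t,ν) + Ẽ(ν) t^q + O(|t|^{q+1})`
with `q` even forces `Ẽ(μ) = 0`. -/
theorem stmt5 {n : Type*} [Fintype n] [DecidableEq n]
    (H : ℝ → Matrix n n ℂ) (hHcont : Continuous H)
    (U : ℝ → ℝ → Matrix n n ℂ) (hU : IsOrderedExp H U)
    (q : ℕ) (hq : 0 < q) (hqeven : Even q) (μ : ℝ)
    (V : ℝ → ℝ → Matrix n n ℂ)
    (Et : ℝ → Matrix n n ℂ) (hEtcont : Continuous Et)
    (hsym : ∃ δ > (0 : ℝ), ∀ x y : ℝ, |x - μ| ≤ δ → |y - μ| ≤ δ → V y x = (V x y)⁻¹)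
    (hexp : ∃ K > (0 : ℝ), ∃ δ > (0 : ℝ), ∀ ν : ℝ, |ν - μ| ≤ δ → ∀ t : ℝ, |t| ≤ δ →
      ‖V (ν + t) ν - U (ν + t) ν - t ^ q • Et ν‖ ≤ K * |t| ^ (q + 1)) :
    Et μ = 0 := by
  obtain ⟨δ₁, hδ₁, hsym'⟩ := hsym
  obtain ⟨K, hK, δ₂, hδ₂, hexp'⟩ := hexp
  set l : Filter ℝ := 𝓝[≠] (0 : ℝ) with hl
  -- the four basic families
  set A : ℝ → Matrix n n ℂ := fun t => V (μ + t) μ with hA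
  set B : ℝ → Matrix n n ℂ := fun t => V μ (μ + t) with hB
  set X : ℝ → Matrix n n ℂ := fun t => U (μ + t) μ with hX
  set Y : ℝ → Matrix n n ℂ := fun t => U μ (μ + t) with hY
  have hgroup : ∀ x y z, U x z = U x y * U y z := ordExp_group H hHcont U hU
  have hXY : ∀ t, X t * Y t = 1 := fun t => by
    rw [hX, hY, ← hgroup, hU.1]
  have hYX : ∀ t, Y t * X t = 1 := fun t => by
    rw [hX, hY, ← hgroup, hU.1]
  -- eventual smallness of |t|
  have hsmall : ∀ δ : ℝ, 0 < δ → ∀ᶠ t in l, |t| ≤ δ := by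
    intro δ hδ
    apply Filter.Eventually.filter_mono nhdsWithin_le_nhds
    have h0 : Metric.ball (0:ℝ) δ ∈ 𝓝 (0:ℝ) := Metric.ball_mem_nhds (0:ℝ) hδ
    filter_upwards [h0] with t ht
    rw [Metric.mem_ball, Real.dist_eq, sub_zero] at ht
    exact ht.le
  have hne : ∀ᶠ t in l, t ≠ 0 := eventually_mem_nhdsWithin
  -- remainder bounds
  have ev1 : ∀ᶠ t in l, ‖A t - X t - t ^ q • Et μ‖ ≤ K * |t| ^ (q + 1) := by
    filter_upwards [hsmall δ₂ hδ₂] with t ht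
    simpa using hexp' μ (by simp [hδ₂.le]) t ht
  have ev2 : ∀ᶠ t in l, ‖B t - Y t - t ^ q • Et (μ + t)‖ ≤ K * |t| ^ (q + 1) := by
    filter_upwards [hsmall δ₂ hδ₂] with t ht
    have := hexp' (μ + t) (by simpa using ht) (-t) (by simpa using ht)
    simpa [hqeven.neg_pow] using this
  have ev3 : ∀ᶠ t in l, B t = (A t)⁻¹ := by
    filter_upwards [hsmall δ₁ hδ₁] with t ht
    simpa using hsym' (μ + t) μ (by simpa using ht) (by simp [hδ₁.le])
  -- basic limits
  have hXcont : Tendsto X l (𝓝 1) := by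
    have hc : Continuous fun s => U s μ :=
      continuous_iff_continuousAt.mpr fun s => (hU.2 s μ).continuousAt
    have : Tendsto X (𝓝 0) (𝓝 (U μ μ)) := by
      have hadd : Continuous fun t : ℝ => μ + t := continuous_const.add continuous_id
      have := (hc.comp hadd).tendsto 0
      simpa [hX, Function.comp_def] using this
    rw [hU.1] at this
    exact this.mono_left nhdsWithin_le_nhds
  have hEtlim : Tendsto (fun t => Et (μ + t)) l (𝓝 (Et μ)) := by
    have hadd : Continuous fun t : ℝ => μ + t := continuous_const.add continuous_id
    have := (hEtcont.comp hadd).tendsto 0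
    simpa [Function.comp_def] using this.mono_left (nhdsWithin_le_nhds (s := {(0:ℝ)}ᶜ))
  have htq : Tendsto (fun t : ℝ => t ^ q • Et (μ + t)) l (𝓝 0) := by
    have h1 : Tendsto (fun t : ℝ => t ^ q) l (𝓝 0) := by
      have := ((continuous_pow q).tendsto (0:ℝ)).mono_left
        (nhdsWithin_le_nhds (s := {(0:ℝ)}ᶜ))
      simpa [zero_pow hq.ne'] using this
    simpa using h1.smul hEtlim
  have htq' : Tendsto (fun t : ℝ => t ^ q • Et μ) l (𝓝 0) := by
    have h1 : Tendsto (fun t : ℝ => t ^ q) l (𝓝 0) := by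
      have := ((continuous_pow q).tendsto (0:ℝ)).mono_left
        (nhdsWithin_le_nhds (s := {(0:ℝ)}ᶜ))
      simpa [zero_pow hq.ne'] using this
    simpa using h1.smul (tendsto_const_nhds (x := Et μ) (f := l))
  have hKt : Tendsto (fun t : ℝ => K * |t| ^ (q + 1)) l (𝓝 0) := by
    have : Tendsto (fun t : ℝ => K * |t| ^ (q + 1)) (𝓝 0) (𝓝 (K * |(0:ℝ)| ^ (q+1))) := by
      exact (tendsto_const_nhds.mul (((continuous_abs).pow (q+1)).tendsto 0))
    simpa [zero_pow (Nat.succ_ne_zero q)] using this.mono_left nhdsWithin_le_nhds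
  have hR1 : Tendsto (fun t => A t - X t - t ^ q • Et μ) l (𝓝 0) :=
    squeeze_zero_norm' ev1 hKt
  have hR2 : Tendsto (fun t => B t - Y t - t ^ q • Et (μ + t)) l (𝓝 0) :=
    squeeze_zero_norm' ev2 hKt
  have hAlim : Tendsto A l (𝓝 1) := by
    have := (hR1.add htq').add hXcont
    simpa using this
  have hYlim : Tendsto Y l (𝓝 1) := by
    have hYinv : ∀ t, Y t = Ring.inverse (X t) := by
      intro t
      have h := Ring.inverse_unit (⟨X t, Y t, hXY t, hYX t⟩ : (Matrix n n ℂ)ˣ)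
      exact h.symm
    have hcont : ContinuousAt (Ring.inverse : Matrix n n ℂ → Matrix n n ℂ) 1 := by
      simpa using NormedRing.inverse_continuousAt (1 : (Matrix n n ℂ)ˣ)
    have := (hcont.tendsto).comp hXcont
    rw [Ring.inverse_one] at this
    exact Tendsto.congr (fun t => (hYinv t).symm) this
  have hBlim : Tendsto B l (𝓝 1) := by
    have := (hR2.add htq).add hYlim
    simpa using this
  -- eventual invertibility of A
  have hAunit : ∀ᶠ t in l, IsUnit (A t) := by
    have h1 : Tendsto (fun t => ‖A t - 1‖) l (𝓝 0) := by
      have := (hAlim.sub (tendsto_const_nhds (x := (1 : Matrix n n ℂ)))).norm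
      simpa using this
    filter_upwards [h1.eventually_lt_const one_pos] with t ht
    have h2 : ‖1 - A t‖ < 1 := by rwa [norm_sub_rev]
    exact ⟨Units.oneSub (1 - A t) h2, by simp [Units.oneSub]⟩
  -- the function f
  set f : ℝ → Matrix n n ℂ := fun t => (t ^ q : ℝ)⁻¹ • (B t - Y t) with hf
  -- Claim 1 : f → Et μ
  have claim1 : Tendsto f l (𝓝 (Et μ)) := by
    have heq : ∀ᶠ t in l, f t = Et (μ + t) + (t ^ q : ℝ)⁻¹ • (B t - Y t - t ^ q • Et (μ + t)) := by
      filter_upwards [hne] with t ht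
      have htq0 : (t ^ q : ℝ) ≠ 0 := pow_ne_zero _ ht
      rw [hf]
      simp only [smul_sub]
      rw [inv_smul_smul₀ htq0]
      abel
    have h2 : Tendsto (fun t => (t ^ q : ℝ)⁻¹ • (B t - Y t - t ^ q • Et (μ + t))) l (𝓝 0) := by
      apply squeeze_zero_norm' (a := fun t => K * |t|)
      · filter_upwards [ev2, hne] with t ht htne
        have habs : (0:ℝ) < |t| ^ q := pow_pos (abs_pos.mpr htne) q
        rw [norm_smul]
        have : ‖(t ^ q : ℝ)⁻¹‖ = (|t| ^ q)⁻¹ := by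
          rw [Real.norm_eq_abs, abs_inv, abs_pow]
        rw [this]
        calc (|t| ^ q)⁻¹ * ‖B t - Y t - t ^ q • Et (μ + t)‖
            ≤ (|t| ^ q)⁻¹ * (K * |t| ^ (q + 1)) := by
              exact mul_le_mul_of_nonneg_left ht (by positivity)
          _ = K * |t| := by
              rw [pow_succ]
              field_simp
      · have : Tendsto (fun t : ℝ => K * |t|) (𝓝 0) (𝓝 (K * |(0:ℝ)|)) :=
          tendsto_const_nhds.mul (continuous_abs.tendsto 0)
        simpa using this.mono_left nhdsWithin_le_nhds
    have := hEtlim.add h2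
    rw [add_zero] at this
    exact Tendsto.congr' (heq.mono fun _ h => h.symm) this
  -- Claim 2 : f → -(Et μ)
  set g : ℝ → Matrix n n ℂ := fun t => (t ^ q : ℝ)⁻¹ • (A t - X t - t ^ q • Et μ) with hg
  have hglim : Tendsto g l (𝓝 0) := by
    apply squeeze_zero_norm' (a := fun t => K * |t|)
    · filter_upwards [ev1, hne] with t ht htne
      rw [norm_smul]
      have h3 : ‖(t ^ q : ℝ)⁻¹‖ = (|t| ^ q)⁻¹ := by
        rw [Real.norm_eq_abs, abs_inv, abs_pow]
      rw [h3]
      have habs : (0:ℝ) < |t| ^ q := pow_pos (abs_pos.mpr htne) q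
      calc (|t| ^ q)⁻¹ * ‖A t - X t - t ^ q • Et μ‖
          ≤ (|t| ^ q)⁻¹ * (K * |t| ^ (q + 1)) :=
            mul_le_mul_of_nonneg_left ht (by positivity)
        _ = K * |t| := by rw [pow_succ]; field_simp
    · have : Tendsto (fun t : ℝ => K * |t|) (𝓝 0) (𝓝 (K * |(0:ℝ)|)) :=
        tendsto_const_nhds.mul (continuous_abs.tendsto 0)
      simpa using this.mono_left nhdsWithin_le_nhds
  have claim2 : Tendsto f l (𝓝 (-(Et μ))) := by
    have heq : ∀ᶠ t in l, f t = B t * (-(Et μ) - g t) * Y t := by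
      filter_upwards [hne, ev3, hAunit] with t ht h3 hu
      have hBA : B t * A t = 1 := by
        rw [h3]
        exact Matrix.nonsing_inv_mul _ ((Matrix.isUnit_iff_isUnit_det _).mp hu)
      have hid : B t - Y t = B t * (X t - A t) * Y t := by
        have e1 : B t * (X t - A t) * Y t
            = B t * (X t * Y t) - (B t * A t) * Y t := by noncomm_ring
        rw [e1, hXY t, hBA, mul_one, one_mul]
      have htq0 : (t ^ q : ℝ) ≠ 0 := pow_ne_zero _ ht
      have hXA : (t ^ q : ℝ)⁻¹ • (X t - A t) = -(Et μ) - g t := by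
        have e2 : X t - A t = -(t ^ q • Et μ) - (A t - X t - t ^ q • Et μ) := by abel
        rw [e2, smul_sub, hg]
        congr 1
        rw [smul_neg, inv_smul_smul₀ htq0]
      rw [hf]
      simp only [hid, ← hXA]
      simp only [mul_smul_comm, smul_mul_assoc]
    have h4 : Tendsto (fun t => B t * (-(Et μ) - g t) * Y t) l
        (𝓝 (1 * (-(Et μ) - 0) * 1)) :=
      (hBlim.mul ((tendsto_const_nhds).sub hglim)).mul hYlim
    rw [one_mul, mul_one, sub_zero] at h4
    exact Tendsto.congr' (heq.mono fun _ h => h.symm) h4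
  have huniq : Et μ = -(Et μ) := tendsto_nhds_unique claim1 claim2
  have h2 : Et μ + Et μ = 0 := by
    nth_rewrite 2 [huniq]
    abel
  have h3 : (2 : ℝ) • Et μ = 0 := by rw [two_smul]; exact h2
  have := smul_eq_zero.mp h3
  rcases this with h | h
  · norm_num at h
  · exact h

end
end

section
/- Let H : ℝ → Matrix n n ℂ be twice continuously differentiable on a neighborhood of μ, and let U be the ordered exponential generated by H. Then ‖U(μ+t, μ) − exp(t · H(μ + t/2))‖ = O(t^{3}) as t → 0⁺, where exp denotes the matrix exponential. -/
open scoped Matrix.Norms.L2Operator Topology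

noncomputable section

variable {n : Type*} [Fintype n] [DecidableEq n]

/-- midpoint-exponential approximation of the ordered exponential has
error `O(t³)` as `t → 0⁺` for `H` twice continuously differentiable near `μ`. -/
theorem stmt7 {n : Type*} [Fintype n] [DecidableEq n]
    (H : ℝ → Matrix n n ℂ) (hHcont : Continuous H)
    (U : ℝ → ℝ → Matrix n n ℂ) (hU : IsOrderedExp H U)
    (μ : ℝ) (hH : ∃ δ > (0 : ℝ), ContDiffOn ℝ 2 H (Metric.ball μ δ)) :
    Asymptotics.IsBigO (𝓝[>] (0 : ℝ))
      (fun t => ‖U (μ + t) μ - NormedSpace.exp (t • H (μ + t / 2))‖)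
      (fun t => t ^ 3) := by
  classical
  obtain ⟨hU1, hU2⟩ := hU
  obtain ⟨δ, hδ, hC2⟩ := hH
  have hBopen : IsOpen (Metric.ball μ δ) := Metric.isOpen_ball
  set δ₀ : ℝ := min (δ / 2) 1 with hδ₀def
  have hδ₀ : 0 < δ₀ := lt_min (by linarith) one_pos
  have hδ₀1 : δ₀ ≤ 1 := min_le_right _ _
  have hδ₀δ : δ₀ ≤ δ / 2 := min_le_left _ _
  have hmem : ∀ r ∈ Set.Icc (0 : ℝ) δ₀, μ + r ∈ Metric.ball μ δ := by
    intro r hr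
    rw [Metric.mem_ball, Real.dist_eq]
    have h1 := hr.1; have h2 := hr.2
    rw [add_sub_cancel_left, abs_of_nonneg h1]
    linarith
  -- derivatives of H
  have hH1 : ∀ x ∈ Metric.ball μ δ, HasDerivAt H (deriv H x) x := fun x hx =>
    ((hC2.contDiffAt (hBopen.mem_nhds hx)).differentiableAt (by norm_num)).hasDerivAt
  have hdHcd : ContDiffOn ℝ 1 (deriv H) (Metric.ball μ δ) :=
    hC2.deriv_of_isOpen hBopen (by norm_num)
  have hdH : ∀ x ∈ Metric.ball μ δ, HasDerivAt (deriv H) (deriv (deriv H) x) x := fun x hx =>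
    ((hdHcd.contDiffAt (hBopen.mem_nhds hx)).differentiableAt one_ne_zero).hasDerivAt
  have hd2cont : ContinuousOn (deriv (deriv H)) (Metric.ball μ δ) :=
    hdHcd.continuousOn_deriv_of_isOpen hBopen le_rfl
  -- continuity of s ↦ U (μ+s) μ
  have hUs : ∀ s : ℝ, HasDerivAt (fun r => U (μ + r) μ) (H (μ + s) * U (μ + s) μ) s := by
    intro s
    have h2 : HasDerivAt (fun r : ℝ => μ + r) 1 s := (hasDerivAt_id s).const_add μ
    have := (hU2 (μ + s) μ).scomp s h2
    simp only [one_smul] at this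
    exact this
  have cUs : Continuous fun r => U (μ + r) μ :=
    continuous_iff_continuousAt.2 fun s => (hUs s).continuousAt
  -- Constants
  have cHsh : Continuous fun r : ℝ => H (μ + r) :=
    hHcont.comp (continuous_const.add continuous_id)
  obtain ⟨K0, hK0⟩ := (isCompact_Icc : IsCompact (Set.Icc (0 : ℝ) δ₀)).exists_bound_of_continuousOn
    (cHsh.continuousOn (s := Set.Icc (0 : ℝ) δ₀))
  have hK0n : 0 ≤ K0 := le_trans (norm_nonneg _) (hK0 0 ⟨le_rfl, hδ₀.le⟩)
  obtain ⟨K1, hK1⟩ := (isCompact_Icc : IsCompact (Set.Icc (0 : ℝ) δ₀)).exists_bound_of_continuousOn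
    (hdHcd.continuousOn.comp ((continuous_const.add continuous_id).continuousOn) hmem)
  have hK1n : 0 ≤ K1 := le_trans (norm_nonneg _) (hK1 0 ⟨le_rfl, hδ₀.le⟩)
  obtain ⟨K2, hK2⟩ := (isCompact_Icc : IsCompact (Set.Icc (0 : ℝ) δ₀)).exists_bound_of_continuousOn
    (hd2cont.comp ((continuous_const.add continuous_id).continuousOn) hmem)
  have hK2n : 0 ≤ K2 := le_trans (norm_nonneg _) (hK2 0 ⟨le_rfl, hδ₀.le⟩)
  obtain ⟨CU, hCU⟩ := (isCompact_Icc : IsCompact (Set.Icc (0 : ℝ) δ₀)).exists_bound_of_continuousOn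
    (cUs.continuousOn (s := Set.Icc (0 : ℝ) δ₀))
  have hCUn : 0 ≤ CU := le_trans (norm_nonneg _) (hCU 0 ⟨le_rfl, hδ₀.le⟩)
  obtain ⟨CE, hCE⟩ :=
    ((isCompact_Icc : IsCompact (Set.Icc (0 : ℝ) δ₀)).prod
        (isCompact_Icc : IsCompact (Set.Icc (0 : ℝ) δ₀))).exists_bound_of_continuousOn
      (((by let +nondep : NormedAlgebra ℚ (Matrix n n ℂ) := .restrictScalars ℚ ℝ (Matrix n n ℂ); exact NormedSpace.exp_continuous : Continuous (NormedSpace.exp : Matrix n n ℂ → Matrix n n ℂ)).comp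
          (continuous_fst.smul (hHcont.comp (continuous_const.add continuous_snd)))).continuousOn
        (s := Set.Icc (0 : ℝ) δ₀ ×ˢ Set.Icc (0 : ℝ) δ₀))
  have hCEn : 0 ≤ CE := le_trans (norm_nonneg _)
    (hCE (0, 0) ⟨⟨le_rfl, hδ₀.le⟩, ⟨le_rfl, hδ₀.le⟩⟩)
  set C₀ : ℝ := CE * ((K1 + K2) * (K0 * CU)) + CE * K0 * (K1 + K2) + K2 with hC₀def
  have hC₀n : 0 ≤ C₀ := by positivity
  -- key estimate
  have key : ∀ t ∈ Set.Ioo (0 : ℝ) δ₀,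
      ‖U (μ + t) μ - NormedSpace.exp (t • H (μ + t / 2))‖ ≤ C₀ * t ^ 3 := by
    intro t ht
    obtain ⟨ht0, htδ⟩ := ht
    have ht1 : t ≤ 1 := le_trans htδ.le hδ₀1
    set A : Matrix n n ℂ := H (μ + t / 2) with hAdef
    set Bm : Matrix n n ℂ := deriv H (μ + t / 2) with hBmdef
    have htmem : t / 2 ∈ Set.Icc (0 : ℝ) δ₀ := ⟨by linarith, by linarith⟩
    -- ‖exp of relevant arguments‖ ≤ CE
    have hEbnd : ∀ u ∈ Set.Icc (0 : ℝ) δ₀, ‖NormedSpace.exp (u • A)‖ ≤ CE := fun u hu =>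
      hCE (u, t / 2) ⟨hu, htmem⟩
    -- derivative of W
    have hW : ∀ s : ℝ, HasDerivAt
        (fun r => NormedSpace.exp ((t - r) • A) * U (μ + r) μ)
        (NormedSpace.exp ((t - s) • A) * ((H (μ + s) - A) * U (μ + s) μ)) s := by
      intro s
      have hinner : HasDerivAt (fun r : ℝ => t - r) (-1) s := (hasDerivAt_id s).const_sub t
      have hEz : HasDerivAt (fun r => NormedSpace.exp ((t - r) • A))
          (-(NormedSpace.exp ((t - s) • A) * A)) s := by
        have := (hasDerivAt_exp_smul_const (𝕂 := ℝ) A (t - s)).scomp s hinner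
        rw [neg_one_smul] at this
        exact this
      have := hEz.mul (hUs s)
      refine this.congr_deriv ?_
      noncomm_ring
    have cEz : Continuous fun r => NormedSpace.exp ((t - r) • A) :=
      (by let +nondep : NormedAlgebra ℚ (Matrix n n ℂ) := .restrictScalars ℚ ℝ (Matrix n n ℂ); exact NormedSpace.exp_continuous : Continuous (NormedSpace.exp : Matrix n n ℂ → Matrix n n ℂ)).comp ((continuous_const.sub continuous_id).smul continuous_const)
    have cG : Continuous fun s =>
        NormedSpace.exp ((t - s) • A) * ((H (μ + s) - A) * U (μ + s) μ) :=
      cEz.mul (((hHcont.comp (continuous_const.add continuous_id)).sub continuous_const).mul cUs)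
    -- FTC
    have hftc : (∫ s in (0:ℝ)..t,
          NormedSpace.exp ((t - s) • A) * ((H (μ + s) - A) * U (μ + s) μ))
        = U (μ + t) μ - NormedSpace.exp (t • A) := by
      rw [intervalIntegral.integral_eq_sub_of_hasDerivAt (fun s _ => hW s)
        (cG.intervalIntegrable 0 t)]
      simp [hU1]
    -- the linear term integrates to zero
    have hzero : (∫ s in (0:ℝ)..t, (s - t / 2) • Bm) = 0 := by
      rw [intervalIntegral.integral_smul_const]
      have : (∫ s in (0:ℝ)..t, (s - t / 2)) = 0 := by
        rw [intervalIntegral.integral_sub intervalIntegral.intervalIntegrable_id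
          (intervalIntegrable_const), integral_id,
          intervalIntegral.integral_const]
        simp only [smul_eq_mul]
        ring
      rw [this, zero_smul]
    have hsplit : U (μ + t) μ - NormedSpace.exp (t • A)
        = ∫ s in (0:ℝ)..t,
          (NormedSpace.exp ((t - s) • A) * ((H (μ + s) - A) * U (μ + s) μ)
            - (s - t / 2) • Bm) := by
      rw [intervalIntegral.integral_sub (cG.intervalIntegrable 0 t)
        ((Continuous.intervalIntegrable (by fun_prop : Continuous fun s : ℝ => (s - t / 2) • Bm)) 0 t),
        hzero, sub_zero, hftc]
    -- pointwise bound
    have hpt : ∀ s ∈ Set.uIoc (0:ℝ) t,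
        ‖NormedSpace.exp ((t - s) • A) * ((H (μ + s) - A) * U (μ + s) μ)
          - (s - t / 2) • Bm‖ ≤ C₀ * t ^ 2 := by
      intro s hs
      rw [Set.uIoc_of_le ht0.le] at hs
      obtain ⟨hs0, hst⟩ := hs
      have hsδ : s ∈ Set.Icc (0 : ℝ) δ₀ := ⟨hs0.le, le_trans hst htδ.le⟩
      have htsδ : t - s ∈ Set.Icc (0 : ℝ) δ₀ := ⟨by linarith, by linarith [hsδ.2, htδ.le]⟩
      -- Taylor bound for H
      have hIccsub : Set.uIcc (t / 2) s ⊆ Set.Icc (0 : ℝ) δ₀ :=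
        Set.uIcc_subset_Icc htmem hsδ
      have hlip : ∀ r ∈ Set.Icc (0 : ℝ) δ₀, ‖deriv H (μ + r) - Bm‖ ≤ K2 * |r - t / 2| := by
        intro r hr
        have := Convex.norm_image_sub_le_of_norm_hasDerivWithin_le
          (f := fun r => deriv H (μ + r)) (f' := fun r => deriv (deriv H) (μ + r))
          (fun x hx => (((hdH (μ + x) (hmem x hx)).scomp x
            ((hasDerivAt_id x).const_add μ)).congr_deriv (one_smul _ _)).hasDerivWithinAt)
          (fun x hx => hK2 x hx) (convex_Icc 0 δ₀) htmem hr
        simpa [Real.norm_eq_abs] using this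
      have hTaylorEq : H (μ + s) - A - (s - t / 2) • Bm
          = ∫ r in (t/2)..s, (deriv H (μ + r) - Bm) := by
        have hder : ∀ r ∈ Set.uIcc (t/2) s,
            HasDerivAt (fun r : ℝ => H (μ + r) - r • Bm) (deriv H (μ + r) - Bm) r := by
          intro r hr
          have h1 : HasDerivAt (fun r : ℝ => H (μ + r)) (deriv H (μ + r)) r :=
            ((hH1 (μ + r) (hmem r (hIccsub hr))).scomp r
              ((hasDerivAt_id r).const_add μ)).congr_deriv (one_smul _ _)
          have h2 : HasDerivAt (fun r : ℝ => r • Bm) ((1:ℝ) • Bm) r :=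
            (hasDerivAt_id r).smul_const Bm
          have h3 := h1.sub h2
          rw [one_smul] at h3
          exact h3
        have hint : IntervalIntegrable (fun r => deriv H (μ + r) - Bm)
            MeasureTheory.volume (t/2) s := by
          apply ContinuousOn.intervalIntegrable
          exact (hdHcd.continuousOn.comp ((continuous_const.add continuous_id).continuousOn)
            (fun r hr => hmem r (hIccsub hr))).sub continuousOn_const
        rw [intervalIntegral.integral_eq_sub_of_hasDerivAt hder hint]
        rw [sub_smul]
        abel
      have hTaylor : ‖H (μ + s) - A - (s - t / 2) • Bm‖ ≤ K2 * t ^ 2 := by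
        rw [hTaylorEq]
        have hb := intervalIntegral.norm_integral_le_of_norm_le_const
          (C := K2 * t) (f := fun r => deriv H (μ + r) - Bm) (a := t/2) (b := s) ?_
        · refine le_trans hb ?_
          have habs : |s - t/2| ≤ t := by
            rw [abs_le]; constructor <;> [linarith; linarith]
          calc K2 * t * |s - t/2| ≤ K2 * t * t := by
                apply mul_le_mul_of_nonneg_left habs; positivity
            _ = K2 * t ^ 2 := by ring
        · intro r hr
          have hr' : r ∈ Set.Icc (0:ℝ) δ₀ := hIccsub (Set.uIoc_subset_uIcc hr)
          refine le_trans (hlip r hr') ?_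
          have : |r - t/2| ≤ t := by
            have h1 := hr'.1
            have h2 : r ∈ Set.uIcc (t/2) s := Set.uIoc_subset_uIcc hr
            rw [Set.uIcc_eq_union] at h2
            have hrle : r ≤ t := by
              rcases h2 with h | h
              · exact le_trans h.2 hst
              · exact le_trans h.2 (by linarith)
            rw [abs_le]; constructor <;> linarith
          apply mul_le_mul_of_nonneg_left this hK2n
      have hBmn : ‖Bm‖ ≤ K1 := hK1 (t/2) htmem
      have hHA : ‖H (μ + s) - A‖ ≤ (K1 + K2) * t := by
        have : H (μ + s) - A = (H (μ + s) - A - (s - t/2) • Bm) + (s - t/2) • Bm := by abel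
        rw [this]
        refine le_trans (norm_add_le _ _) ?_
        rw [norm_smul, Real.norm_eq_abs]
        have habs : |s - t/2| ≤ t := by rw [abs_le]; constructor <;> linarith
        have h2 : |s - t/2| * ‖Bm‖ ≤ t * K1 :=
          mul_le_mul habs hBmn (norm_nonneg _) ht0.le
        have h3 : K2 * t ^ 2 ≤ K2 * t := by nlinarith [mul_nonneg (mul_nonneg hK2n ht0.le) (sub_nonneg.2 ht1)]
        nlinarith [hTaylor]
      -- bound on U - 1
      have hU1bnd : ‖U (μ + s) μ - 1‖ ≤ K0 * CU * t := by
        have heq : U (μ + s) μ - 1 = ∫ r in (0:ℝ)..s, H (μ + r) * U (μ + r) μ := by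
          rw [intervalIntegral.integral_eq_sub_of_hasDerivAt (fun r _ => hUs r)
            (((hHcont.comp (continuous_const.add continuous_id)).mul cUs).intervalIntegrable 0 s)]
          simp [hU1 μ]
        rw [heq]
        have hb := intervalIntegral.norm_integral_le_of_norm_le_const
          (C := K0 * CU) (f := fun r => H (μ + r) * U (μ + r) μ) (a := (0:ℝ)) (b := s) ?_
        · refine le_trans hb ?_
          rw [sub_zero, abs_of_nonneg hs0.le]
          exact mul_le_mul_of_nonneg_left hst (by positivity)
        · intro r hr
          rw [Set.uIoc_of_le hs0.le] at hr
          have hr' : r ∈ Set.Icc (0:ℝ) δ₀ := ⟨hr.1.le, le_trans hr.2 hsδ.2⟩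
          exact le_trans (norm_mul_le _ _)
            (mul_le_mul (hK0 r hr') (hCU r hr') (norm_nonneg _) hK0n)
      -- bound on exp - 1
      have hE1bnd : ‖NormedSpace.exp ((t - s) • A) - 1‖ ≤ CE * K0 * t := by
        have heq : NormedSpace.exp ((t - s) • A) - 1
            = ∫ u in (0:ℝ)..(t - s), NormedSpace.exp (u • A) * A := by
          rw [intervalIntegral.integral_eq_sub_of_hasDerivAt
            (fun u _ => hasDerivAt_exp_smul_const (𝕂 := ℝ) A u)
            ((((by let +nondep : NormedAlgebra ℚ (Matrix n n ℂ) := .restrictScalars ℚ ℝ (Matrix n n ℂ); exact NormedSpace.exp_continuous : Continuous (NormedSpace.exp : Matrix n n ℂ → Matrix n n ℂ)).comp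
              (continuous_id.smul continuous_const)).mul continuous_const).intervalIntegrable 0 (t - s))]
          simp
        rw [heq]
        have hb := intervalIntegral.norm_integral_le_of_norm_le_const
          (C := CE * K0) (f := fun u => NormedSpace.exp (u • A) * A) (a := (0:ℝ)) (b := t - s) ?_
        · refine le_trans hb ?_
          rw [sub_zero, abs_of_nonneg (by linarith : (0:ℝ) ≤ t - s)]
          have : t - s ≤ t := by linarith
          exact mul_le_mul_of_nonneg_left this (by positivity)
        · intro u hu
          rw [Set.uIoc_of_le (by linarith : (0:ℝ) ≤ t - s)] at hu
          have hu' : u ∈ Set.Icc (0:ℝ) δ₀ := ⟨hu.1.le, le_trans hu.2 htsδ.2⟩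
          have hAn : ‖A‖ ≤ K0 := hK0 (t/2) htmem
          exact le_trans (norm_mul_le _ _)
            (mul_le_mul (hEbnd u hu') hAn (norm_nonneg _) hCEn)
      -- decomposition
      have hdecomp : NormedSpace.exp ((t - s) • A) * ((H (μ + s) - A) * U (μ + s) μ)
            - (s - t / 2) • Bm
          = NormedSpace.exp ((t - s) • A) * ((H (μ + s) - A) * (U (μ + s) μ - 1))
            + (NormedSpace.exp ((t - s) • A) - 1) * (H (μ + s) - A)
            + (H (μ + s) - A - (s - t / 2) • Bm) := by
        set E := NormedSpace.exp ((t - s) • A)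
        set X := (s - t / 2) • Bm
        set HH := H (μ + s)
        set UU := U (μ + s) μ
        noncomm_ring
      rw [hdecomp]
      have hEn : ‖NormedSpace.exp ((t - s) • A)‖ ≤ CE := hEbnd _ htsδ
      have hUn : ‖U (μ + s) μ‖ ≤ CU := hCU s hsδ
      have t1 : ‖NormedSpace.exp ((t - s) • A) * ((H (μ + s) - A) * (U (μ + s) μ - 1))‖
          ≤ CE * ((K1 + K2) * t * (K0 * CU * t)) := by
        refine le_trans (norm_mul_le _ _) ?_
        refine mul_le_mul hEn (le_trans (norm_mul_le _ _) ?_) (norm_nonneg _) hCEn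
        exact mul_le_mul hHA hU1bnd (norm_nonneg _) (by positivity)
      have t2 : ‖(NormedSpace.exp ((t - s) • A) - 1) * (H (μ + s) - A)‖
          ≤ CE * K0 * t * ((K1 + K2) * t) := by
        refine le_trans (norm_mul_le _ _) ?_
        exact mul_le_mul hE1bnd hHA (norm_nonneg _) (by positivity)
      calc ‖_ + _ + _‖ ≤ _ + _ + _ := norm_add₃_le
        _ ≤ CE * ((K1 + K2) * t * (K0 * CU * t)) + CE * K0 * t * ((K1 + K2) * t) + K2 * t ^ 2 :=
            add_le_add (add_le_add t1 t2) hTaylor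
        _ = C₀ * t ^ 2 := by rw [hC₀def]; ring
    -- final bound
    rw [hsplit]
    have := intervalIntegral.norm_integral_le_of_norm_le_const hpt
    rw [sub_zero, abs_of_nonneg ht0.le] at this
    calc ‖_‖ ≤ C₀ * t ^ 2 * t := this
      _ = C₀ * t ^ 3 := by ring
  -- conclude IsBigO
  rw [Asymptotics.isBigO_iff]
  refine ⟨C₀, ?_⟩
  filter_upwards [Ioo_mem_nhdsGT_of_mem (Set.left_mem_Ico.2 hδ₀)] with t ht
  rw [norm_norm, Real.norm_eq_abs, abs_of_nonneg (pow_nonneg ht.1.le 3)]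
  exact key t ht


end
end

section
/- Let A_1, …, A_m be fixed matrices in Matrix n n ℂ. Then the symmetrized Trotter product satisfies ‖(∏_{j=1}^m exp(A_j t/2))·(∏_{j=m}^1 exp(A_j t/2)) − exp(t(A_1 + ⋯ + A_m))‖ = O(t^{3}) as t → 0, where the first product is taken in the order j = 1,…,m and the second in the order j = m,…,1. -/
open scoped Matrix.Norms.L2Operator Topology

noncomputable section

variable {n : Type*} [Fintype n] [DecidableEq n]

open Asymptotics Filter
open scoped Nat

section helpers
variable {𝔸 : Type*} [NormedRing 𝔸] [NormedAlgebra ℝ 𝔸] [CompleteSpace 𝔸]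

lemma expAnalyticAux (X : 𝔸) : AnalyticAt ℝ (fun t : ℝ => NormedSpace.exp (t • X)) 0 := by
  have h1 : AnalyticAt ℝ (fun t : ℝ => t • X) 0 := analyticAt_id.smul analyticAt_const
  have h2 : AnalyticAt ℝ (NormedSpace.exp) ((fun t : ℝ => t • X) 0) := by
    exact NormedSpace.exp_analytic _
  exact AnalyticAt.comp (f := fun t : ℝ => t • X) (g := NormedSpace.exp) h2 h1

lemma bigO_cubed {f : ℝ → 𝔸} (hf : AnalyticAt ℝ f 0) (h0 : f 0 = 0)
    (h1 : deriv f 0 = 0) (h2 : deriv (deriv f) 0 = 0) :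
    f =O[𝓝 (0:ℝ)] fun t => t ^ 3 := by
  obtain ⟨p, hp⟩ := hf
  have hder : ∀ k < 3, iteratedDeriv k f 0 = 0 := by
    intro k hk
    interval_cases k
    · simpa [iteratedDeriv_zero] using h0
    · simpa [iteratedDeriv_one] using h1
    · rw [iteratedDeriv_succ, iteratedDeriv_one]
      exact h2
  have key : ∀ k < 3, ∀ y : ℝ, p k (fun _ => y) = 0 := by
    intro k hk y
    obtain ⟨r, hpb⟩ := hp
    have hfs := hpb.factorial_smul (y := y) k
    have hdiag : iteratedFDeriv ℝ k f 0 (fun _ => y) = 0 := by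
      have hy : (fun _ : Fin k => y) = fun i : Fin k => y • (1 : ℝ) := by
        funext i; simp
      rw [hy, ContinuousMultilinearMap.map_smul_univ]
      have : iteratedDeriv k f 0 = 0 := hder k hk
      simp only [iteratedDeriv] at this
      simp [this]
    rw [hdiag] at hfs
    have : (k ! : ℝ) • p k (fun _ => y) = 0 := by
      rw [Nat.cast_smul_eq_nsmul]; exact hfs
    rcases smul_eq_zero.mp this with h | h
    · exact absurd h (by positivity)
    · exact h
  have hps : ∀ y : ℝ, p.partialSum 3 y = 0 := by
    intro y
    have e0 : p.coeff 0 = 0 := key 0 (by norm_num) 1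
    have e1 : p.coeff 1 = 0 := key 1 (by norm_num) 1
    have e2 : p.coeff 2 = 0 := key 2 (by norm_num) 1
    simp [FormalMultilinearSeries.partialSum, Finset.sum_range_succ, e0, e1, e2]
  have H := hp.isBigO_sub_partialSum_pow 3
  simp only [zero_add, hps, sub_zero] at H
  refine H.trans (Asymptotics.isBigO_of_le _ fun x => ?_)
  simp [abs_pow]

lemma coreTrotter (A B : 𝔸) :
    (fun t : ℝ => NormedSpace.exp (t • A) * NormedSpace.exp (t • B) *
        NormedSpace.exp (t • A) - NormedSpace.exp (t • (A + B + A)))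
      =O[𝓝 (0:ℝ)] fun t => t ^ 3 := by
  set u : ℝ → 𝔸 := fun t => NormedSpace.exp (t • A) with hu
  set v : ℝ → 𝔸 := fun t => NormedSpace.exp (t • B) with hv
  set w : ℝ → 𝔸 := fun t => NormedSpace.exp (t • (A + B + A)) with hw
  have hu' : ∀ t : ℝ, HasDerivAt u (A * u t) t := fun t => hasDerivAt_exp_smul_const' A t
  have hv' : ∀ t : ℝ, HasDerivAt v (B * v t) t := fun t => hasDerivAt_exp_smul_const' B t
  have hw' : ∀ t : ℝ, HasDerivAt w ((A + B + A) * w t) t := fun t =>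
    hasDerivAt_exp_smul_const' (A + B + A) t
  have hd : ∀ t : ℝ, HasDerivAt (fun s => u s * v s * u s - w s)
      ((A * u t * v t + u t * (B * v t)) * u t + u t * v t * (A * u t)
        - (A + B + A) * w t) t := fun t =>
    (((hu' t).mul (hv' t)).mul (hu' t)).sub (hw' t)
  have hderiv : deriv (fun s => u s * v s * u s - w s) = fun t =>
      (A * u t * v t + u t * (B * v t)) * u t + u t * v t * (A * u t)
        - (A + B + A) * w t := funext fun t => (hd t).deriv
  have hone : u 0 = 1 ∧ v 0 = 1 ∧ w 0 = 1 := by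
    refine ⟨?_, ?_, ?_⟩ <;> simp [hu, hv, hw, NormedSpace.exp_zero]
  apply bigO_cubed
  · exact (((expAnalyticAux A).mul (expAnalyticAux B)).mul (expAnalyticAux A)).sub
      (expAnalyticAux (A + B + A))
  · simp [hone.1, hone.2.1, hone.2.2]
  · rw [(hd 0).deriv, hone.1, hone.2.1, hone.2.2]
    simp only [mul_one, one_mul]
    abel
  · rw [hderiv]
    have h2 := (((((((hu' 0).const_mul A).mul (hv' 0)).add
        ((hu' 0).mul ((hv' 0).const_mul B))).mul (hu' 0)).add
        (((hu' 0).mul (hv' 0)).mul ((hu' 0).const_mul A))).sub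
        ((hw' 0).const_mul (A + B + A)))
    simp only [Pi.mul_apply, Pi.add_apply] at h2
    rw [HasDerivAt.deriv (f := fun t => (A * u t * v t + u t * (B * v t)) * u t + u t * v t * (A * u t)
      - (A + B + A) * w t) h2, hone.1, hone.2.1, hone.2.2]
    simp only [mul_one, one_mul]
    noncomm_ring


lemma keyTrotter : ∀ (m : ℕ) (B : Fin m → 𝔸),
    (fun t : ℝ => (List.ofFn fun j : Fin m => NormedSpace.exp (t • B j)).prod *
        ((List.ofFn fun j : Fin m => NormedSpace.exp (t • B j)).reverse).prod -
      NormedSpace.exp (t • (2 • ∑ j, B j))) =O[𝓝 (0:ℝ)] fun t => t ^ 3 := by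
  intro m
  induction m with
  | zero =>
    intro B
    have hz : (fun t : ℝ => (List.ofFn fun j : Fin 0 => NormedSpace.exp (t • B j)).prod *
        ((List.ofFn fun j : Fin 0 => NormedSpace.exp (t • B j)).reverse).prod -
      NormedSpace.exp (t • (2 • ∑ j, B j))) = fun _ => (0 : 𝔸) := by
      funext t
      simp [NormedSpace.exp_zero]
    rw [hz]
    exact isBigO_zero _ _
  | succ m ih =>
    intro B
    set e : ℝ → 𝔸 := fun t => NormedSpace.exp (t • B 0) with he
    set L : ℝ → 𝔸 := fun t =>
      (List.ofFn fun j : Fin m => NormedSpace.exp (t • B j.succ)).prod with hL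
    set R : ℝ → 𝔸 := fun t =>
      ((List.ofFn fun j : Fin m => NormedSpace.exp (t • B j.succ)).reverse).prod with hR
    set G : ℝ → 𝔸 := fun t => NormedSpace.exp (t • (2 • ∑ j : Fin m, B j.succ)) with hG
    have heq : (fun t : ℝ =>
        (List.ofFn fun j : Fin (m+1) => NormedSpace.exp (t • B j)).prod *
          ((List.ofFn fun j : Fin (m+1) => NormedSpace.exp (t • B j)).reverse).prod -
        NormedSpace.exp (t • (2 • ∑ j, B j))) =
        (fun t => e t * ((L t * R t - G t) * e t)) + fun t =>
          (e t * (G t * e t) - NormedSpace.exp (t • (2 • ∑ j : Fin (m+1), B j))) := by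
      funext t
      simp only [List.ofFn_succ, List.prod_cons, List.reverse_cons, List.prod_append,
        List.prod_cons, List.prod_nil, Pi.add_apply, he, hL, hR, hG]
      noncomm_ring
    rw [heq]
    refine IsBigO.add ?_ ?_
    · have hcont : ContinuousAt e 0 := (hasDerivAt_exp_smul_const' (B 0) (0:ℝ)).continuousAt
      have hc : ∀ᶠ t in 𝓝 (0:ℝ), ‖e t‖ ≤ ‖e 0‖ + 1 := by
        have ht : Filter.Tendsto (fun t => ‖e t‖) (𝓝 0) (𝓝 ‖e 0‖) := hcont.norm
        exact (ht.eventually_lt_const (by linarith)).mono fun _ h => h.le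
      refine (IsBigO.of_bound ((‖e 0‖ + 1) * (‖e 0‖ + 1)) ?_).trans (ih fun j => B j.succ)
      filter_upwards [hc] with t ht
      have h1 : ‖e t * ((L t * R t - G t) * e t)‖ ≤ ‖e t‖ * (‖L t * R t - G t‖ * ‖e t‖) :=
        (norm_mul_le _ _).trans (by gcongr; exact norm_mul_le _ _)
      have h0 : (0:ℝ) ≤ ‖L t * R t - G t‖ := norm_nonneg _
      have h0' : (0:ℝ) ≤ ‖e t‖ := norm_nonneg _
      calc ‖e t * ((L t * R t - G t) * e t)‖ ≤ ‖e t‖ * (‖L t * R t - G t‖ * ‖e t‖) := h1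
        _ = ‖e t‖ * ‖e t‖ * ‖L t * R t - G t‖ := by ring
        _ ≤ (‖e 0‖ + 1) * (‖e 0‖ + 1) * ‖L t * R t - G t‖ := by
            have hE : ‖e t‖ * ‖e t‖ ≤ (‖e 0‖ + 1) * (‖e 0‖ + 1) :=
              mul_le_mul ht ht h0' (by positivity)
            exact mul_le_mul_of_nonneg_right hE h0
    · have hcore := coreTrotter (B 0) (2 • ∑ j : Fin m, B j.succ)
      have hsum : B 0 + 2 • ∑ j : Fin m, B j.succ + B 0 = 2 • ∑ j : Fin (m+1), B j := by
        rw [Fin.sum_univ_succ]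
        abel
      have heq2 : (fun t : ℝ =>
          (e t * (G t * e t) - NormedSpace.exp (t • (2 • ∑ j : Fin (m+1), B j)))) =
          fun t : ℝ => NormedSpace.exp (t • B 0) *
              NormedSpace.exp (t • (2 • ∑ j : Fin m, B j.succ)) *
              NormedSpace.exp (t • B 0) -
            NormedSpace.exp (t • (B 0 + 2 • ∑ j : Fin m, B j.succ + B 0)) := by
        funext t
        rw [hsum, he, hG, mul_assoc]
      rw [heq2]
      exact hcore

end helpers

/-- the symmetrized Trotter product of constant matrices agrees with
`exp(t(A₁ + ⋯ + A_m))` up to `O(t³)` as `t → 0`. -/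
theorem stmt8 {n : Type*} [Fintype n] [DecidableEq n]
    {m : ℕ} (A : Fin m → Matrix n n ℂ) :
    Asymptotics.IsBigO (𝓝 (0 : ℝ))
      (fun t : ℝ =>
        ‖(List.ofFn fun j : Fin m => NormedSpace.exp ((t / 2) • A j)).prod *
            ((List.ofFn fun j : Fin m => NormedSpace.exp ((t / 2) • A j)).reverse).prod -
          NormedSpace.exp (t • ∑ j, A j)‖)
      (fun t => t ^ 3) := by
  have h := keyTrotter m (fun j => (2⁻¹ : ℝ) • A j)
  have hexp : (NormedSpace.exp : Matrix n n ℂ → Matrix n n ℂ) = NormedSpace.exp :=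
    rfl
  have hsm : ∀ (t : ℝ) (j : Fin m), (t / 2) • A j = t • ((2⁻¹:ℝ) • A j) := by
    intro t j; rw [smul_smul, div_eq_mul_inv]
  have hsum : (∑ j, A j) = 2 • ∑ j, (2⁻¹:ℝ) • A j := by
    rw [Finset.smul_sum]
    refine Finset.sum_congr rfl fun j _ => ?_
    rw [two_smul, ← add_smul]; norm_num
  have heq : ∀ t : ℝ,
      (List.ofFn fun j : Fin m => NormedSpace.exp ((t / 2) • A j)).prod *
        ((List.ofFn fun j : Fin m => NormedSpace.exp ((t / 2) • A j)).reverse).prod -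
        NormedSpace.exp (t • ∑ j, A j)
      = (List.ofFn fun j : Fin m => NormedSpace.exp (t • ((2⁻¹:ℝ) • A j))).prod *
        ((List.ofFn fun j : Fin m => NormedSpace.exp (t • ((2⁻¹:ℝ) • A j))).reverse).prod -
        NormedSpace.exp (t • (2 • ∑ j, (2⁻¹:ℝ) • A j)) := by
    intro t
    rw [hsum]
    simp_rw [hsm]
  simpa only [heq] using h.norm_left


end
end

section
/- Let k ≥ 1 be an integer, Γ ≥ 0, and X_0, …, X_{2k} be nonnegative reals with X_p ≤ Γ^{p+1} for each 0 ≤ p ≤ 2k. Let f(t) = exp(Σ_{p=0}^{2k} (X_p/p!) t^{p+1}), with Taylor series Σ_n a_n t^n at 0 (all a_n ≥ 0). Then for every t ≥ 0 with √2·Γ·t ≤ 1/2, the tail beyond order 2k satisfies Σ_{n=2k+1}^∞ a_n t^n ≤ 2·(√2·Γ·t)^{2k+1}. -/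
open scoped Matrix.Norms.L2Operator Topology

noncomputable section

variable {n : Type*} [Fintype n] [DecidableEq n]

open Polynomial Finset
open scoped ContDiff

private lemma poly_contDiff (Q : ℝ[X]) : ContDiff ℝ ∞ fun t : ℝ => Q.eval t := by
  have h : (fun t : ℝ => Q.eval t) = fun t => ∑ i ∈ Finset.range (Q.natDegree+1), Q.coeff i * t ^ i :=
    funext fun t => Q.eval_eq_sum_range t
  rw [h]
  exact ContDiff.sum fun i _ => contDiff_const.mul (contDiff_id.pow i)

private lemma iter_poly (q : ℕ) (Q : ℝ[X]) :
    iteratedDeriv q (fun t : ℝ => Q.eval t) = fun t => (derivative^[q] Q).eval t := by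
  induction q with
  | zero => simp
  | succ q ih =>
    rw [iteratedDeriv_succ, ih, Function.iterate_succ_apply']
    funext t
    exact Polynomial.deriv _

private lemma pascal_sum (a b : ℕ → ℝ) (n : ℕ) :
    ∑ q ∈ range (n+1), (n.choose q : ℝ) * a (q+1) * b (n-q)
      + ∑ q ∈ range (n+1), (n.choose q : ℝ) * a q * b (n-q+1)
    = ∑ q ∈ range (n+2), ((n+1).choose q : ℝ) * a q * b (n+1-q) := by
  rw [Finset.sum_range_succ' (fun q => ((n+1).choose q : ℝ) * a q * b (n+1-q)) (n+1)]
  rw [Finset.sum_range_succ' (fun q => (n.choose q : ℝ) * a q * b (n-q+1)) n]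
  have h1 : ∀ i ∈ range (n+1), ((n+1).choose (i+1) : ℝ) * a (i+1) * b (n+1-(i+1))
      = (n.choose i : ℝ) * a (i+1) * b (n-i) + (n.choose (i+1) : ℝ) * a (i+1) * b (n-i) := by
    intro i hi
    have : (n+1).choose (i+1) = n.choose i + n.choose (i+1) := Nat.choose_succ_succ' n i
    rw [this]
    push_cast
    ring
  rw [Finset.sum_congr rfl h1, Finset.sum_add_distrib]
  have h2 : ∀ i ∈ range n, (n.choose (i+1) : ℝ) * a (i+1) * b (n-(i+1)+1)
      = (n.choose (i+1) : ℝ) * a (i+1) * b (n-i) := by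
    intro i hi
    simp only [Finset.mem_range] at hi
    have : n - (i+1) + 1 = n - i := by omega
    rw [this]
  rw [Finset.sum_congr rfl h2]
  have h3 : ∑ i ∈ range (n+1), (n.choose (i+1) : ℝ) * a (i+1) * b (n-i)
      = ∑ i ∈ range n, (n.choose (i+1) : ℝ) * a (i+1) * b (n-i) := by
    rw [Finset.sum_range_succ]
    simp [Nat.choose_succ_self]
  rw [h3]
  simp only [Nat.choose_zero_right, Nat.cast_one, Nat.sub_zero]
  ring

private lemma leib (n : ℕ) : ∀ (g f : ℝ → ℝ), ContDiff ℝ ∞ g → ContDiff ℝ ∞ f → ∀ x : ℝ,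
    iteratedDeriv n (fun t => g t * f t) x
      = ∑ q ∈ range (n+1), (n.choose q : ℝ) * iteratedDeriv q g x * iteratedDeriv (n-q) f x := by
  induction n with
  | zero => intro g f _ _ x; simp
  | succ n ih =>
    intro g f hg hf x
    have hg' : ContDiff ℝ ∞ (deriv g) := (contDiff_infty_iff_deriv.mp hg).2
    have hf' : ContDiff ℝ ∞ (deriv f) := (contDiff_infty_iff_deriv.mp hf).2
    have hD : deriv (fun t => g t * f t) = fun t => deriv g t * f t + g t * deriv f t := by
      funext t
      exact deriv_mul ((hg.differentiable (by simp)) t) ((hf.differentiable (by simp)) t)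
    rw [iteratedDeriv_succ', hD]
    have hA : ContDiff ℝ ∞ (fun t => deriv g t * f t) := hg'.mul hf
    have hB : ContDiff ℝ ∞ (fun t => g t * deriv f t) := hg.mul hf'
    have hadd : iteratedDeriv n (fun t => deriv g t * f t + g t * deriv f t) x
        = iteratedDeriv n (fun t => deriv g t * f t) x + iteratedDeriv n (fun t => g t * deriv f t) x := by
      simp only [← iteratedDerivWithin_univ]
      exact iteratedDerivWithin_add (Set.mem_univ x) uniqueDiffOn_univ
        ((hA.of_le (by exact_mod_cast le_top)).contDiffWithinAt) ((hB.of_le (by exact_mod_cast le_top)).contDiffWithinAt)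
    rw [hadd, ih _ _ hg' hf x, ih _ _ hg hf' x]
    have e1 : ∀ q, iteratedDeriv q (deriv g) x = iteratedDeriv (q+1) g x := by
      intro q; rw [iteratedDeriv_succ']
    have e2 : ∀ q, iteratedDeriv q (deriv f) x = iteratedDeriv (q+1) f x := by
      intro q; rw [iteratedDeriv_succ']
    simp only [e1, e2]
    exact pascal_sum (fun q => iteratedDeriv q g x) (fun q => iteratedDeriv q f x) n

private lemma aux_sqrt : ∀ q : ℕ, (q + 1 : ℝ) ≤ (q.factorial : ℝ) * Real.sqrt 2 ^ (q+1) := by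
  have h1 : (1:ℝ) ≤ Real.sqrt 2 := by
    rw [show (1:ℝ) = Real.sqrt 1 by simp]
    exact Real.sqrt_le_sqrt (by norm_num)
  have hsq : Real.sqrt 2 ^ 2 = 2 := Real.sq_sqrt (by norm_num)
  intro q
  induction q with
  | zero => simpa using h1
  | succ q ih =>
    rcases q with _ | r
    · push_cast
      norm_num [Nat.factorial]
    · have hfact : ((r+2).factorial : ℝ) = (r+2) * ((r+1).factorial : ℝ) := by
        rw [Nat.factorial_succ]; push_cast; ring
      have hpow : Real.sqrt 2 ^ (r+3) = Real.sqrt 2 ^ (r+2) * Real.sqrt 2 := by ring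
      have : ((r+2:ℕ) + 1 : ℝ) ≤ ((r+2).factorial : ℝ) * Real.sqrt 2 ^ (r+3) := by
        push_cast
        rw [hfact, hpow]
        push_cast at ih
        set F : ℝ := ((r+1).factorial : ℝ) * Real.sqrt 2 ^ (r+1+1) with hF
        have hFr : (r + 2 : ℝ) ≤ F := by rw [hF]; linarith [ih]
        have hpr : ((r:ℝ)+2) * ((r+1).factorial : ℝ) * (Real.sqrt 2 ^ (r+2) * Real.sqrt 2)
            = ((r:ℝ)+2) * F * Real.sqrt 2 := by rw [hF]; ring_nf
        rw [hpr]
        have h2 : (r+3 : ℝ) ≤ (r+2) * (r+2) := by nlinarith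
        have h3 : ((r:ℝ)+2) * (r+2) ≤ (r+2) * F := by
          have : (0:ℝ) ≤ r + 2 := by positivity
          exact mul_le_mul_of_nonneg_left hFr this
        have h4 : ((r:ℝ)+2) * F ≤ (r+2) * F * Real.sqrt 2 := by
          have hFnn : (0:ℝ) ≤ (r+2) * F := by nlinarith
          nlinarith [h1, hFnn]
        linarith
      exact_mod_cast this

private lemma coeff_bound (k : ℕ) (Γ : ℝ) (hΓ : 0 ≤ Γ) (X : ℕ → ℝ)
    (hX0 : ∀ p ≤ 2*k, 0 ≤ X p) (hX : ∀ p ≤ 2*k, X p ≤ Γ^(p+1))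
    (f : ℝ → ℝ)
    (hf : ∀ t, f t = Real.exp (∑ p ∈ Finset.range (2*k+1),
        X p / (Nat.factorial p : ℝ) * t^(p+1))) :
    ∀ n, |iteratedDeriv n f 0| ≤ (n.factorial : ℝ) * (Real.sqrt 2 * Γ)^n := by
  set E : ℝ[X] := ∑ p ∈ range (2*k+1), C (X p / (p.factorial:ℝ)) * Polynomial.X^(p+1) with hE
  have hfE : f = fun t => Real.exp (E.eval t) := by
    funext t; rw [hf]; simp [hE, eval_finset_sum]
  set P : ℝ[X] := derivative E with hP
  have hfs : ContDiff ℝ ∞ f := by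
    rw [hfE]; exact Real.contDiff_exp.comp (poly_contDiff E)
  have hderiv : deriv f = fun t => P.eval t * f t := by
    funext t
    have h1 : HasDerivAt f (Real.exp (E.eval t) * P.eval t) t := by
      rw [hfE]; exact (E.hasDerivAt t).exp
    rw [h1.deriv]
    simp only [hfE]; ring
  have hEco : ∀ m : ℕ, E.coeff (m+1) = if m ∈ range (2*k+1) then X m / (m.factorial:ℝ) else 0 := by
    intro m
    simp only [hE, finset_sum_coeff, coeff_C_mul, coeff_X_pow]
    simp only [add_left_inj, mul_ite, mul_one, mul_zero]
    rw [Finset.sum_ite_eq]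
  have hH : ∀ q : ℕ, |iteratedDeriv q (fun t : ℝ => P.eval t) 0|
      ≤ (q.factorial:ℝ) * (Real.sqrt 2 * Γ)^(q+1) := by
    intro q
    rw [iter_poly q P]
    show |eval 0 (derivative^[q] P)| ≤ _
    rw [← coeff_zero_eq_eval_zero, coeff_iterate_derivative]
    simp only [zero_add]
    rw [hP, coeff_derivative, hEco q]
    simp only [zero_add, Nat.descFactorial_self, smul_eq_mul, nsmul_eq_mul]
    by_cases hq : q ∈ range (2*k+1)
    · simp only [hq, if_true]
      have hqk : q ≤ 2*k := Nat.lt_succ_iff.mp (Finset.mem_range.mp hq)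
      have hfq : (0:ℝ) < (q.factorial : ℝ) := by positivity
      have hval : (q.factorial:ℝ) * (X q / (q.factorial:ℝ) * ((q:ℝ)+1)) = ((q:ℝ)+1) * X q := by
        field_simp
      have h0 : (0:ℝ) ≤ ((q:ℝ)+1) * X q :=
        mul_nonneg (by positivity) (hX0 q hqk)
      rw [hval, abs_of_nonneg h0]
      calc ((q:ℝ)+1) * X q ≤ ((q:ℝ)+1) * Γ^(q+1) :=
            mul_le_mul_of_nonneg_left (hX q hqk) (by positivity)
        _ ≤ ((q.factorial:ℝ) * Real.sqrt 2 ^(q+1)) * Γ^(q+1) :=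
            mul_le_mul_of_nonneg_right (aux_sqrt q) (by positivity)
        _ = (q.factorial:ℝ) * (Real.sqrt 2 * Γ)^(q+1) := by rw [mul_pow]; ring
    · simp only [hq, if_false, zero_mul, mul_zero, abs_zero]
      positivity
  intro n
  induction n using Nat.strong_induction_on with
  | _ n ih =>
    rcases n with _ | m
    · simp [hf]
    · rw [iteratedDeriv_succ', hderiv, leib m _ f (poly_contDiff P) hfs 0]
      have hx : (0:ℝ) ≤ Real.sqrt 2 * Γ := mul_nonneg (Real.sqrt_nonneg 2) hΓ
      calc |∑ q ∈ range (m+1), (m.choose q:ℝ) * iteratedDeriv q (fun t => eval t P) 0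
              * iteratedDeriv (m-q) f 0|
          ≤ ∑ q ∈ range (m+1), (m.choose q:ℝ) * ((q.factorial:ℝ) * (Real.sqrt 2 * Γ)^(q+1))
              * (((m-q).factorial:ℝ) * (Real.sqrt 2 * Γ)^(m-q)) := by
            refine (Finset.abs_sum_le_sum_abs _ _).trans (Finset.sum_le_sum ?_)
            intro q hq
            rw [abs_mul, abs_mul, abs_of_nonneg (by positivity : (0:ℝ) ≤ (m.choose q:ℝ))]
            have hb := ih (m - q) (by omega)
            gcongr <;> first
              | exact hH q
              | exact hb
              | exact abs_nonneg _
        _ = ∑ q ∈ range (m+1), (m.factorial : ℝ) * (Real.sqrt 2 * Γ)^(m+1) := by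
            refine Finset.sum_congr rfl ?_
            intro q hq
            simp only [Finset.mem_range] at hq
            have hq' : q ≤ m := by omega
            have hc : (m.choose q : ℝ) * (q.factorial:ℝ) * ((m-q).factorial:ℝ)
                = (m.factorial:ℝ) := by
              exact_mod_cast congrArg (Nat.cast (R := ℝ))
                (Nat.choose_mul_factorial_mul_factorial hq')
            have hp : (Real.sqrt 2 * Γ)^(q+1) * (Real.sqrt 2 * Γ)^(m-q)
                = (Real.sqrt 2 * Γ)^(m+1) := by
              rw [← pow_add]; congr 1; omega
            calc (m.choose q:ℝ) * ((q.factorial:ℝ) * (Real.sqrt 2 * Γ)^(q+1))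
                  * (((m-q).factorial:ℝ) * (Real.sqrt 2 * Γ)^(m-q))
                = ((m.choose q:ℝ) * (q.factorial:ℝ) * ((m-q).factorial:ℝ))
                  * ((Real.sqrt 2 * Γ)^(q+1) * (Real.sqrt 2 * Γ)^(m-q)) := by ring
              _ = _ := by rw [hc, hp]
        _ = ((m+1).factorial : ℝ) * (Real.sqrt 2 * Γ)^(m+1) := by
            rw [Finset.sum_const, Finset.card_range, nsmul_eq_mul, Nat.factorial_succ]
            push_cast; ring


/-- tail bound for `f(t) = exp(Σ_{p=0}^{2k} (X_p/p!) t^{p+1})` when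
`X_p ≤ Γ^{p+1}` and `√2 Γ t ≤ 1/2`. -/
theorem stmt11 (k : ℕ) (hk : 1 ≤ k) (Γ : ℝ) (hΓ : 0 ≤ Γ)
    (X : ℕ → ℝ) (hX0 : ∀ p ≤ 2 * k, 0 ≤ X p) (hX : ∀ p ≤ 2 * k, X p ≤ Γ ^ (p + 1))
    (f : ℝ → ℝ)
    (hf : ∀ t, f t = Real.exp (∑ p ∈ Finset.range (2 * k + 1),
        X p / (Nat.factorial p : ℝ) * t ^ (p + 1)))
    (t : ℝ) (ht : 0 ≤ t) (ht2 : Real.sqrt 2 * Γ * t ≤ 1 / 2) :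
    ∑' i : ℕ, iteratedDeriv (i + (2 * k + 1)) f 0 / (Nat.factorial (i + (2 * k + 1)) : ℝ)
        * t ^ (i + (2 * k + 1))
      ≤ 2 * (Real.sqrt 2 * Γ * t) ^ (2 * k + 1) := by

  have hbd := coeff_bound k Γ hΓ X hX0 hX f hf
  set N := 2 * k + 1 with hN
  set x := Real.sqrt 2 * Γ * t with hxdef
  have hx0 : 0 ≤ x := mul_nonneg (mul_nonneg (Real.sqrt_nonneg 2) hΓ) ht
  have hx1 : x < 1 := lt_of_le_of_lt ht2 (by norm_num)
  have hx2 : (0:ℝ) < 1 - x := by linarith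
  have habs : ∀ i : ℕ,
      |iteratedDeriv (i + N) f 0 / (Nat.factorial (i + N) : ℝ) * t ^ (i + N)| ≤ x ^ N * x ^ i := by
    intro i
    have hb := hbd (i + N)
    have hfp : (0:ℝ) < ((i + N).factorial : ℝ) := by positivity
    rw [abs_mul, abs_div, abs_of_nonneg (pow_nonneg ht _), abs_of_nonneg hfp.le]
    calc |iteratedDeriv (i + N) f 0| / ((i + N).factorial : ℝ) * t ^ (i + N)
        ≤ (((i + N).factorial : ℝ) * (Real.sqrt 2 * Γ) ^ (i + N)) / ((i + N).factorial : ℝ)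
            * t ^ (i + N) := by
          gcongr
      _ = (Real.sqrt 2 * Γ) ^ (i + N) * t ^ (i + N) := by field_simp
      _ = x ^ (i + N) := by simp [hxdef, mul_pow]
      _ = x ^ N * x ^ i := by rw [← pow_add]; congr 1; omega
  have hgeo : Summable (fun i : ℕ => x ^ N * x ^ i) :=
    (summable_geometric_of_lt_one hx0 hx1).mul_left _
  have hsml : Summable (fun i : ℕ =>
      iteratedDeriv (i + N) f 0 / (Nat.factorial (i + N) : ℝ) * t ^ (i + N)) := by
    apply Summable.of_abs
    exact Summable.of_nonneg_of_le (fun i => abs_nonneg _) habs hgeo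
  have hinv : (1 - x)⁻¹ ≤ 2 := by
    rw [inv_le_comm₀ hx2 (by norm_num)]
    linarith
  calc ∑' i : ℕ, iteratedDeriv (i + N) f 0 / (Nat.factorial (i + N) : ℝ) * t ^ (i + N)
      ≤ ∑' i : ℕ, x ^ N * x ^ i :=
        Summable.tsum_le_tsum (fun i => (le_abs_self _).trans (habs i)) hsml hgeo
    _ = x ^ N * (1 - x)⁻¹ := by rw [tsum_mul_left, tsum_geometric_of_lt_one hx0 hx1]
    _ ≤ x ^ N * 2 := mul_le_mul_of_nonneg_left hinv (pow_nonneg hx0 N)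
    _ = 2 * x ^ N := mul_comm _ _


end
end

section
/- Let H = Σ_{j=1}^m H_j where the family {H_j} of maps ℝ → Matrix n n ℂ is Λ-2k-smooth on [μ, μ+Δλ], let U be the ordered exponential generated by H, and suppose ‖U(x,y)‖ ≤ 1 for all μ ≤ y ≤ x ≤ μ+Δλ. Then ‖U(μ+Δλ, μ) − Σ_{p=0}^{2k} (Δλ^p/p!) T_p(μ)‖ ≤ (Λ Δλ)^{2k+1}, where T_0(u) = 1 and T_{p+1}(u) = T_p(u) H(u) + T_p'(u). -/
open scoped Matrix.Norms.L2Operator Topology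

noncomputable section

variable {n : Type*} [Fintype n] [DecidableEq n]

namespace Stmt13Aux

open Set List

/-- Formal derivative of a word (a list of derivative orders). -/
def dW : List ℕ → List (List ℕ)
  | [] => []
  | a :: w => ((a + 1) :: w) :: (dW w).map (a :: ·)

/-- The list of words representing `T_p`. -/
def Wseq : ℕ → List (List ℕ)
  | 0 => [[]]
  | p + 1 => ((Wseq p).map (· ++ [0])) ++ (Wseq p).flatMap dW

lemma length_dW (w : List ℕ) : (dW w).length = w.length := by
  induction w with
  | nil => rfl
  | cons a w ih => simp [dW, ih]

lemma weight_dW {w w' : List ℕ} (h : w' ∈ dW w) :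
    w'.sum + w'.length = w.sum + w.length + 1 := by
  induction w generalizing w' with
  | nil => simp [dW] at h
  | cons a w ih =>
    simp only [dW, List.mem_cons, List.mem_map] at h
    rcases h with rfl | ⟨v, hv, rfl⟩
    · simp only [List.sum_cons, List.length_cons]; omega
    · have := ih hv
      simp only [List.sum_cons, List.length_cons] at *
      omega

lemma weight_Wseq : ∀ p, ∀ w ∈ Wseq p, w.sum + w.length = p
  | 0, w, hw => by
    simp only [Wseq, List.mem_singleton] at hw
    subst hw; simp
  | p + 1, w, hw => by
    simp only [Wseq, List.mem_append, List.mem_map, List.mem_flatMap] at hw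
    rcases hw with ⟨v, hv, rfl⟩ | ⟨v, hv, hw⟩
    · have := weight_Wseq p v hv
      simp only [List.sum_append, List.length_append, List.sum_cons, List.sum_nil,
        List.length_cons, List.length_nil]
      omega
    · have h1 := weight_Wseq p v hv
      have h2 := weight_dW hw
      omega

lemma mem_le_sum {a : ℕ} : ∀ {w : List ℕ}, a ∈ w → a ≤ w.sum := by
  intro w hw
  induction w with
  | nil => simp at hw
  | cons b w ih =>
    rcases List.mem_cons.1 hw with rfl | h
    · simp
    · have := ih h; simp only [List.sum_cons]; omega

lemma entry_lt {p : ℕ} {w : List ℕ} (hw : w ∈ Wseq p) {a : ℕ} (ha : a ∈ w) : a < p := by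
  have h1 := weight_Wseq p w hw
  have h2 := mem_le_sum ha
  have h3 : 1 ≤ w.length := List.length_pos_iff.2 (List.ne_nil_of_mem ha)
  omega

lemma length_Wseq : ∀ p, (Wseq p).length ≤ p.factorial
  | 0 => by simp [Wseq]
  | p + 1 => by
    have ih := length_Wseq p
    have hflat : ((Wseq p).flatMap dW).length ≤ (Wseq p).length * p := by
      rw [List.length_flatMap]
      calc (List.map (List.length ∘ dW) (Wseq p)).sum
          ≤ (List.map (List.length ∘ dW) (Wseq p)).length • p := by
            refine List.sum_le_card_nsmul _ _ ?_
            intro x hx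
            rcases List.mem_map.1 hx with ⟨w, hw, rfl⟩
            have h1 := weight_Wseq p w hw
            simp only [Function.comp_apply, length_dW]
            omega
        _ = (Wseq p).length * p := by simp [List.length_map, smul_eq_mul]
    calc (Wseq (p + 1)).length
        = (Wseq p).length + ((Wseq p).flatMap dW).length := by
          simp [Wseq, List.length_append, List.length_map]
      _ ≤ p.factorial + p.factorial * p := by
          have : ((Wseq p).flatMap dW).length ≤ p.factorial * p :=
            hflat.trans (Nat.mul_le_mul_right p ih)
          omega
      _ = (p + 1).factorial := by rw [Nat.factorial_succ]; ring

variable {n : Type*} [Fintype n] [DecidableEq n]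

/-- Evaluation of a word: the ordered product of `F a u` over the entries. -/
def wEval (F : ℕ → ℝ → Matrix n n ℂ) (w : List ℕ) (u : ℝ) : Matrix n n ℂ :=
  (w.map (fun a => F a u)).prod

/-- Evaluation of a list of words: the sum of the word evaluations. -/
def lEval (F : ℕ → ℝ → Matrix n n ℂ) (L : List (List ℕ)) (u : ℝ) : Matrix n n ℂ :=
  (L.map (fun w => wEval F w u)).sum

lemma wEval_nil (F : ℕ → ℝ → Matrix n n ℂ) (u : ℝ) : wEval F [] u = 1 := rfl

lemma wEval_cons (F : ℕ → ℝ → Matrix n n ℂ) (a : ℕ) (w : List ℕ) (u : ℝ) :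
    wEval F (a :: w) u = F a u * wEval F w u := by
  simp [wEval]

lemma wEval_append_zero (F : ℕ → ℝ → Matrix n n ℂ) (w : List ℕ) (u : ℝ) :
    wEval F (w ++ [0]) u = wEval F w u * F 0 u := by
  simp [wEval, List.prod_append]

lemma lEval_cons (F : ℕ → ℝ → Matrix n n ℂ) (w : List ℕ) (L : List (List ℕ)) (u : ℝ) :
    lEval F (w :: L) u = wEval F w u + lEval F L u := by
  simp [lEval]

lemma lEval_append (F : ℕ → ℝ → Matrix n n ℂ) (L L' : List (List ℕ)) (u : ℝ) :
    lEval F (L ++ L') u = lEval F L u + lEval F L' u := by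
  simp [lEval]

variable {F : ℕ → ℝ → Matrix n n ℂ} {s : Set ℝ} {N : ℕ}

lemma wEval_hasDeriv (hFd : ∀ a < N, ∀ u ∈ s, HasDerivWithinAt (F a) (F (a + 1) u) s u)
    {w : List ℕ} (hw : ∀ a ∈ w, a < N) {u : ℝ} (hu : u ∈ s) :
    HasDerivWithinAt (fun v => wEval F w v) (lEval F (dW w) u) s u := by
  induction w with
  | nil =>
    have : lEval F (dW []) u = 0 := rfl
    rw [this]
    simp only [wEval_nil]
    exact hasDerivWithinAt_const u s (1 : Matrix n n ℂ)
  | cons a w ih =>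
    have h1 : HasDerivWithinAt (F a) (F (a + 1) u) s u :=
      hFd a (hw a (List.mem_cons_self)) u hu
    have h2 := ih (fun b hb => hw b (List.mem_cons_of_mem a hb))
    have h3 : HasDerivWithinAt (fun v => F a v * wEval F w v)
        (F (a + 1) u * wEval F w u + F a u * lEval F (dW w) u) s u := h1.mul h2
    have heq : (fun v => wEval F (a :: w) v) = fun v => F a v * wEval F w v := by
      funext v; rw [wEval_cons]
    rw [heq]
    convert h3 using 1
    show lEval F (dW (a :: w)) u = _
    rw [show dW (a :: w) = ((a + 1) :: w) :: (dW w).map (a :: ·) from rfl,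
      lEval_cons, wEval_cons]
    congr 1
    show ((List.map (a :: ·) (dW w)).map (fun w => wEval F w u)).sum = F a u * lEval F (dW w) u
    rw [List.map_map]
    have : ((fun w => wEval F w u) ∘ (a :: ·)) = fun w' => F a u * wEval F w' u := by
      funext w'; simp [Function.comp, wEval_cons]
    rw [this, List.sum_map_mul_left]
    rfl

lemma lEval_hasDeriv (hFd : ∀ a < N, ∀ u ∈ s, HasDerivWithinAt (F a) (F (a + 1) u) s u)
    {L : List (List ℕ)} (hL : ∀ w ∈ L, ∀ a ∈ w, a < N) {u : ℝ} (hu : u ∈ s) :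
    HasDerivWithinAt (fun v => lEval F L v) (lEval F (L.flatMap dW) u) s u := by
  induction L with
  | nil =>
    have : lEval F (([] : List (List ℕ)).flatMap dW) u = 0 := rfl
    rw [this]
    simp only [lEval]
    simp only [List.map_nil, List.sum_nil]
    exact hasDerivWithinAt_const u s (0 : Matrix n n ℂ)
  | cons w L ih =>
    have h1 := wEval_hasDeriv hFd (hL w (List.mem_cons_self)) hu
    have h2 := ih (fun v hv => hL v (List.mem_cons_of_mem w hv))
    have heq : (fun v => lEval F (w :: L) v) = fun v => wEval F w v + lEval F L v := by
      funext v; rw [lEval_cons]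
    rw [heq, List.flatMap_cons, lEval_append]
    exact h1.add h2

lemma norm_wEval_le [Nonempty n] {Λ : ℝ} (hΛ : 0 ≤ Λ) {u : ℝ} {w : List ℕ}
    (hF : ∀ a ∈ w, ‖F a u‖ ≤ Λ ^ (a + 1)) :
    ‖wEval F w u‖ ≤ Λ ^ (w.sum + w.length) := by
  induction w with
  | nil => simp [wEval_nil]
  | cons a w ih =>
    have h1 : ‖F a u‖ ≤ Λ ^ (a + 1) := hF a (List.mem_cons_self)
    have h2 := ih (fun b hb => hF b (List.mem_cons_of_mem a hb))
    rw [wEval_cons]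
    calc ‖F a u * wEval F w u‖ ≤ ‖F a u‖ * ‖wEval F w u‖ := norm_mul_le _ _
      _ ≤ Λ ^ (a + 1) * Λ ^ (w.sum + w.length) := by
          exact mul_le_mul h1 h2 (norm_nonneg _) (pow_nonneg hΛ _)
      _ = Λ ^ ((a :: w).sum + (a :: w).length) := by
          rw [← pow_add]
          congr 1
          simp only [List.sum_cons, List.length_cons]
          omega

lemma norm_lEval_le [Nonempty n] {Λ : ℝ} (hΛ : 0 ≤ Λ) {u : ℝ} {p : ℕ} {L : List (List ℕ)}
    (hL : ∀ w ∈ L, w.sum + w.length = p ∧ ∀ a ∈ w, ‖F a u‖ ≤ Λ ^ (a + 1)) :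
    ‖lEval F L u‖ ≤ L.length * Λ ^ p := by
  induction L with
  | nil => simp [lEval]
  | cons w L ih =>
    have h1 := hL w (List.mem_cons_self)
    have h2 := ih (fun v hv => hL v (List.mem_cons_of_mem w hv))
    rw [lEval_cons]
    calc ‖wEval F w u + lEval F L u‖ ≤ ‖wEval F w u‖ + ‖lEval F L u‖ := norm_add_le _ _
      _ ≤ Λ ^ p + L.length * Λ ^ p := by
          refine add_le_add ?_ h2
          have := norm_wEval_le hΛ h1.2
          rwa [h1.1] at this
      _ = (w :: L).length * Λ ^ p := by
          simp only [List.length_cons]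
          push_cast
          ring

lemma tseq_eq_lEval {H : ℝ → Matrix n n ℂ} (hs : UniqueDiffOn ℝ s)
    (hF0 : ∀ u ∈ s, F 0 u = H u)
    (hFd : ∀ a < N, ∀ u ∈ s, HasDerivWithinAt (F a) (F (a + 1) u) s u) :
    ∀ p, p ≤ N + 1 → ∀ u ∈ s, Tseq H s p u = lEval F (Wseq p) u := by
  intro p
  induction p with
  | zero =>
    intro _ u hu
    show (1 : Matrix n n ℂ) = lEval F [[]] u
    rw [lEval_cons, wEval_nil]
    simp [lEval]
  | succ p ih =>
    intro hp u hu
    have hp' : p ≤ N := by omega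
    have ihp := ih (by omega)
    have hent : ∀ w ∈ Wseq p, ∀ a ∈ w, a < N :=
      fun w hw a ha => lt_of_lt_of_le (entry_lt hw ha) hp'
    have hrep : Tseq H s (p + 1) u
        = Tseq H s p u * H u + derivWithin (Tseq H s p) s u := rfl
    rw [hrep]
    have ht1 : Tseq H s p u * H u = lEval F ((Wseq p).map (· ++ [0])) u := by
      rw [ihp u hu, ← hF0 u hu]
      show lEval F (Wseq p) u * F 0 u = _
      simp only [lEval, List.map_map]
      rw [← List.sum_map_mul_right]
      congr 1
      apply List.map_congr_left
      intro w _
      simp [Function.comp, wEval_append_zero]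
    have ht2 : derivWithin (Tseq H s p) s u = lEval F ((Wseq p).flatMap dW) u := by
      rw [derivWithin_congr (fun y hy => ihp y hy) (ihp u hu)]
      exact (lEval_hasDeriv hFd hent hu).derivWithin (hs u hu)
    rw [ht1, ht2]
    show _ = lEval F ((Wseq p).map (· ++ [0]) ++ (Wseq p).flatMap dW) u
    rw [lEval_append]

lemma tseq_hasDerivWithinAt {H : ℝ → Matrix n n ℂ} (hs : UniqueDiffOn ℝ s)
    (hF0 : ∀ u ∈ s, F 0 u = H u)
    (hFd : ∀ a < N, ∀ u ∈ s, HasDerivWithinAt (F a) (F (a + 1) u) s u)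
    {p : ℕ} (hp : p ≤ N) {u : ℝ} (hu : u ∈ s) :
    HasDerivWithinAt (Tseq H s p) (derivWithin (Tseq H s p) s u) s u := by
  have hent : ∀ w ∈ Wseq p, ∀ a ∈ w, a < N :=
    fun w hw a ha => lt_of_lt_of_le (entry_lt hw ha) hp
  have h := (lEval_hasDeriv hFd hent hu).congr
    (fun y hy => tseq_eq_lEval hs hF0 hFd p (by omega) y hy)
    (tseq_eq_lEval hs hF0 hFd p (by omega) u hu)
  exact h.differentiableWithinAt.hasDerivWithinAt

lemma norm_tseq_le [Nonempty n] {H : ℝ → Matrix n n ℂ} (hs : UniqueDiffOn ℝ s)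
    (hF0 : ∀ u ∈ s, F 0 u = H u)
    (hFd : ∀ a < N, ∀ u ∈ s, HasDerivWithinAt (F a) (F (a + 1) u) s u)
    {Λ : ℝ} (hΛ : 0 ≤ Λ)
    (hFnorm : ∀ a ≤ N, ∀ u ∈ s, ‖F a u‖ ≤ Λ ^ (a + 1))
    {p : ℕ} (hp : p ≤ N + 1) {u : ℝ} (hu : u ∈ s) :
    ‖Tseq H s p u‖ ≤ p.factorial * Λ ^ p := by
  rw [tseq_eq_lEval hs hF0 hFd p hp u hu]
  have hL : ∀ w ∈ Wseq p, w.sum + w.length = p ∧ ∀ a ∈ w, ‖F a u‖ ≤ Λ ^ (a + 1) := by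
    intro w hw
    refine ⟨weight_Wseq p w hw, fun a ha => ?_⟩
    exact hFnorm a (by have := entry_lt hw ha; omega) u hu
  calc ‖lEval F (Wseq p) u‖ ≤ (Wseq p).length * Λ ^ p := norm_lEval_le hΛ hL
    _ ≤ p.factorial * Λ ^ p := by
        refine mul_le_mul_of_nonneg_right ?_ (pow_nonneg hΛ _)
        exact_mod_cast length_Wseq p

/-- Sharp Taylor remainder bound with the `1/(N+1)!` factor. -/
lemma taylor_sharp {E : Type*} [NormedAddCommGroup E] [NormedSpace ℝ E]
    {f : ℝ → E} {a b C : ℝ} {N : ℕ} (hab : a < b)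
    (hf : ContDiffOn ℝ N f (Set.Icc a b))
    (hf' : DifferentiableOn ℝ (iteratedDerivWithin N f (Set.Icc a b)) (Set.Icc a b))
    (hC : 0 ≤ C)
    (hbound : ∀ y ∈ Set.Icc a b, ‖iteratedDerivWithin (N + 1) f (Set.Icc a b) y‖ ≤ C) :
    ‖f b - taylorWithinEval f N (Set.Icc a b) a b‖
      ≤ C * (b - a) ^ (N + 1) / (N + 1).factorial := by
  set φ : ℝ → E := fun t => taylorWithinEval f N (Set.Icc a b) t b with hφdef
  have hφ : ∀ t ∈ Icc a b, HasDerivWithinAt φ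
      (((N.factorial : ℝ)⁻¹ * (b - t) ^ N) • iteratedDerivWithin (N + 1) f (Icc a b) t)
      (Icc a b) t :=
    fun t ht => hasDerivWithinAt_taylorWithinEval_at_Icc b hab ht hf hf'
  set ψ : ℝ → E := fun t => φ t - φ a with hψdef
  have hψc : ContinuousOn ψ (Icc a b) := by
    have : ContinuousOn φ (Icc a b) :=
      fun t ht => (hφ t ht).continuousWithinAt
    exact this.sub continuousOn_const
  have hψ' : ∀ t ∈ Ico a b, HasDerivWithinAt ψ
      (((N.factorial : ℝ)⁻¹ * (b - t) ^ N) • iteratedDerivWithin (N + 1) f (Icc a b) t)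
      (Ici t) t := by
    intro t ht
    have h1 := (hφ t (Ico_subset_Icc_self ht)).sub_const (φ a)
    exact h1.mono_of_mem_nhdsWithin (Icc_mem_nhdsGE_of_mem ht)
  set B : ℝ → ℝ := fun t => C / (N + 1).factorial * ((b - a) ^ (N + 1) - (b - t) ^ (N + 1))
    with hBdef
  have hfact : ((N + 1).factorial : ℝ) = (N + 1) * N.factorial := by
    rw [Nat.factorial_succ]; push_cast; ring
  have hfacpos : (0 : ℝ) < N.factorial := by exact_mod_cast N.factorial_pos
  have hfacpos' : (0 : ℝ) < (N + 1).factorial := by exact_mod_cast (N + 1).factorial_pos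
  have hB : ∀ t, HasDerivAt B (C / N.factorial * (b - t) ^ N) t := by
    intro t
    have h1 : HasDerivAt (fun y : ℝ => (b - a) ^ (N + 1) - (b - y) ^ (N + 1))
        (0 - (-(N + 1) * (b - t) ^ N)) t :=
      (hasDerivAt_const t ((b - a) ^ (N + 1))).sub (monomial_has_deriv_aux t b N)
    have h2 := h1.const_mul (C / (N + 1).factorial)
    refine h2.congr_deriv ?_
    rw [hfact]
    field_simp
    ring
  have hbnd : ∀ t ∈ Ico a b,
      ‖((N.factorial : ℝ)⁻¹ * (b - t) ^ N) • iteratedDerivWithin (N + 1) f (Icc a b) t‖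
        ≤ C / N.factorial * (b - t) ^ N := by
    intro t ht
    rw [norm_smul, Real.norm_eq_abs]
    have hbt : 0 ≤ b - t := by have := ht.2; linarith
    have habs : |(N.factorial : ℝ)⁻¹ * (b - t) ^ N| = (N.factorial : ℝ)⁻¹ * (b - t) ^ N := by
      rw [abs_of_nonneg]
      positivity
    rw [habs]
    calc (N.factorial : ℝ)⁻¹ * (b - t) ^ N * ‖iteratedDerivWithin (N + 1) f (Icc a b) t‖
        ≤ (N.factorial : ℝ)⁻¹ * (b - t) ^ N * C := by
          refine mul_le_mul_of_nonneg_left ?_ (by positivity)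
          exact hbound t (Ico_subset_Icc_self ht)
      _ = C / N.factorial * (b - t) ^ N := by ring
  have hψa : ‖ψ a‖ ≤ B a := by
    simp only [hψdef, hBdef, sub_self, norm_zero]
    exact le_of_eq (by ring)
  have key := image_norm_le_of_norm_deriv_right_le_deriv_boundary hψc hψ' hψa hB hbnd
    (right_mem_Icc.2 hab.le)
  have hψb : ψ b = f b - taylorWithinEval f N (Set.Icc a b) a b := by
    simp only [hψdef, hφdef]
    rw [taylorWithinEval_self]
  have hBb : B b = C * (b - a) ^ (N + 1) / (N + 1).factorial := by
    simp only [hBdef, sub_self]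
    rw [zero_pow (Nat.succ_ne_zero N)]
    ring
  rw [hψb, hBb] at key
  exact key

end Stmt13Aux

/-- `‖U(μ+Δt, μ) - Σ_{p=0}^{2k} (Δt^p/p!) T_p(μ)‖ ≤ (ΛΔt)^{2k+1}` for a
`Λ`-`2k`-smooth family with `‖U‖ ≤ 1` on the interval. -/
theorem stmt13 {n : Type*} [Fintype n] [DecidableEq n]
    {m : ℕ} (hm : 1 ≤ m) (Hs : Fin m → ℝ → Matrix n n ℂ)
    (H : ℝ → Matrix n n ℂ) (hHsum : ∀ u, H u = ∑ j, Hs j u) (hHcont : Continuous H)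
    (U : ℝ → ℝ → Matrix n n ℂ) (hU : IsOrderedExp H U)
    (k : ℕ) (Λ μ Δt : ℝ) (hΔt : 0 < Δt)
    (hsmooth : LambdaSmoothOn Hs Λ (2 * k) μ (μ + Δt))
    (hUnorm : ∀ x y : ℝ, μ ≤ y → y ≤ x → x ≤ μ + Δt → ‖U x y‖ ≤ 1) :
    ‖U (μ + Δt) μ - ∑ p ∈ Finset.range (2 * k + 1),
        (Δt ^ p / (Nat.factorial p : ℝ)) • Tseq H (Set.Icc μ (μ + Δt)) p μ‖
      ≤ (Λ * Δt) ^ (2 * k + 1) := by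
  classical
  have hΛ : 0 ≤ Λ := hsmooth.2.1
  have hRHS : 0 ≤ (Λ * Δt) ^ (2 * k + 1) := pow_nonneg (mul_nonneg hΛ hΔt.le) _
  rcases isEmpty_or_nonempty n with hn | hn
  · rw [Subsingleton.elim (U (μ + Δt) μ - _) (0 : Matrix n n ℂ), norm_zero]
    exact hRHS
  set s : Set ℝ := Set.Icc μ (μ + Δt) with hsdef
  have hab : μ < μ + Δt := lt_add_of_pos_right μ hΔt
  have hs : UniqueDiffOn ℝ s := uniqueDiffOn_Icc hab
  set N := 2 * k with hNdef
  set F : ℕ → ℝ → Matrix n n ℂ := fun a u => ∑ j, iteratedDerivWithin a (Hs j) s u with hFdef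
  have hF0 : ∀ u ∈ s, F 0 u = H u := by
    intro u hu
    simp only [hFdef, iteratedDerivWithin_zero]
    exact (hHsum u).symm
  have hFd : ∀ a < N, ∀ u ∈ s, HasDerivWithinAt (F a) (F (a + 1) u) s u := by
    intro a ha u hu
    refine HasDerivWithinAt.fun_sum fun j _ => ?_
    have hd := (hsmooth.1 j a ha u hu).hasDerivWithinAt
    rwa [← iteratedDerivWithin_succ] at hd
  have hFnorm : ∀ a ≤ N, ∀ u ∈ s, ‖F a u‖ ≤ Λ ^ (a + 1) := by
    intro a ha u hu
    exact (norm_sum_le _ _).trans (hsmooth.2.2 a ha u hu)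
  set g : ℝ → Matrix n n ℂ := fun x => U x μ with hgdef
  have hgd : ∀ x, HasDerivAt g (H x * g x) x := fun x => hU.2 x μ
  have key : ∀ p, p ≤ N + 1 → ∀ u ∈ s, iteratedDerivWithin p g s u = Tseq H s p u * g u := by
    intro p
    induction p with
    | zero =>
      intro _ u hu
      rw [iteratedDerivWithin_zero]
      show g u = (1 : Matrix n n ℂ) * g u
      rw [one_mul]
    | succ p ih =>
      intro hp u hu
      have hp' : p ≤ N := by omega
      rw [iteratedDerivWithin_succ,
        derivWithin_congr (fun y hy => ih (by omega) y hy) (ih (by omega) u hu)]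
      have hT := Stmt13Aux.tseq_hasDerivWithinAt hs hF0 hFd hp' hu
      have hgu : HasDerivWithinAt g (H u * g u) s u := (hgd u).hasDerivWithinAt
      rw [(show HasDerivWithinAt (fun y => Tseq H s p y * g y) _ s u from hT.mul hgu).derivWithin (hs u hu)]
      show derivWithin (Tseq H s p) s u * g u + Tseq H s p u * (H u * g u)
        = (Tseq H s p u * H u + derivWithin (Tseq H s p) s u) * g u
      noncomm_ring
  have hdiffm : ∀ m ≤ N, DifferentiableOn ℝ (iteratedDerivWithin m g s) s := by
    intro m hm u hu
    have hT := Stmt13Aux.tseq_hasDerivWithinAt hs hF0 hFd hm hu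
    have hd := (hT.mul (hgd u).hasDerivWithinAt).differentiableWithinAt
    exact hd.congr (fun y hy => key m (by omega) y hy) (key m (by omega) u hu)
  have hgCD : ContDiffOn ℝ N g s := by
    refine (contDiffOn_iff_continuousOn_differentiableOn_deriv hs).2 ⟨?_, ?_⟩
    · intro m hm
      exact (hdiffm m (by exact_mod_cast hm)).continuousOn
    · intro m hm
      exact hdiffm m (le_of_lt (by exact_mod_cast hm))
  have hbound : ∀ y ∈ s, ‖iteratedDerivWithin (N + 1) g s y‖
      ≤ (N + 1).factorial * Λ ^ (N + 1) := by
    intro y hy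
    rw [key (N + 1) le_rfl y hy]
    have h1 : ‖Tseq H s (N + 1) y‖ ≤ (N + 1).factorial * Λ ^ (N + 1) :=
      Stmt13Aux.norm_tseq_le hs hF0 hFd hΛ hFnorm le_rfl hy
    have h2 : ‖g y‖ ≤ 1 := hUnorm y μ le_rfl hy.1 hy.2
    calc ‖Tseq H s (N + 1) y * g y‖ ≤ ‖Tseq H s (N + 1) y‖ * ‖g y‖ := norm_mul_le _ _
      _ ≤ ((N + 1).factorial * Λ ^ (N + 1)) * 1 :=
          mul_le_mul h1 h2 (norm_nonneg _) (by positivity)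
      _ = (N + 1).factorial * Λ ^ (N + 1) := mul_one _
  have taylor := Stmt13Aux.taylor_sharp hab hgCD (hdiffm N le_rfl) (by positivity) hbound
  have hμs : μ ∈ s := Set.left_mem_Icc.2 hab.le
  have hts : taylorWithinEval g N s μ (μ + Δt)
      = ∑ p ∈ Finset.range (N + 1), (Δt ^ p / (p.factorial : ℝ)) • Tseq H s p μ := by
    rw [taylor_within_apply]
    refine Finset.sum_congr rfl fun p hp => ?_
    have hp' : p ≤ N + 1 := by
      have := Finset.mem_range.1 hp; omega
    have hgμ : g μ = 1 := hU.1 μ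
    rw [key p hp' μ hμs, hgμ, mul_one]
    congr 1
    rw [add_sub_cancel_left]
    rw [div_eq_mul_inv, mul_comm]
  have hgoal : U (μ + Δt) μ = g (μ + Δt) := rfl
  rw [hgoal, ← hts]
  refine taylor.trans ?_
  rw [add_sub_cancel_left]
  have hfacpos : (0 : ℝ) < (N + 1).factorial := by exact_mod_cast (N + 1).factorial_pos
  rw [mul_pow]
  rw [mul_comm ((N + 1).factorial : ℝ) (Λ ^ (N + 1)), mul_assoc, mul_comm (((N+1).factorial : ℝ)) (Δt ^ (N+1)), ← mul_assoc, mul_div_assoc, div_self (ne_of_gt hfacpos), mul_one]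

end
end
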